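/- arXiv:math/0607598 — 4 statements merged into one kernel-verified Lean document; each statement's English description precedes it below -/
import Mathlib

section
/- Let f be a quasiperiodically forced circle homeomorphism over an irrational ω with lift F whose fibered rotation number is 0, and suppose there exists an F-invariant strip. Suppose further that for some ε > 0 the fibered rotation numbers of both F_ε and F_{−ε} equal 0. Then there exist an integer N ≥ 1 and continuous curves γ⁻, γ⁺ : T¹ → ℝ with γ⁻(θ) < γ⁺(θ) for all θ, such that for every θ ∈ T¹ one has γ⁻(θ+Nω) < F^N_θ(γ⁻(θ)) and F^N_θ(γ⁺(θ)) < γ⁺(θ+Nω); in other words, the N-th iterate of F maps the compact region {(θ,x) : γ⁻(θ) ≤ x ≤ γ⁺(θ)} into its own interior. -/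
open Filter Topology MeasureTheory
open scoped ENNReal

noncomputable section

/-- The circle `T¹ = ℝ/ℤ`. -/
abbrev T1 := AddCircle (1 : ℝ)

/-- Fiberwise iterate of the skew product: `fiberIter ω F n θ x = F^n_θ(x)`. -/
def fiberIter (ω : ℝ) (F : T1 → ℝ → ℝ) : ℕ → T1 → ℝ → ℝ
  | 0, _, x => x
  | n + 1, θ, x => fiberIter ω F n (θ + (ω : T1)) (F θ x)

/-- `F` is (the fiber part of) a lift of a quasiperiodically forced circle homeomorphism
over `ω`: `F(θ,x) = (θ+ω, F_θ(x))`, each `F_θ` a strictly increasing homeomorphism of `ℝ`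
commuting with `x ↦ x+1`. -/
structure IsQpfLift (ω : ℝ) (F : T1 → ℝ → ℝ) : Prop where
  cont : Continuous fun p : T1 × ℝ => F p.1 p.2
  mono : ∀ θ, StrictMono (F θ)
  surj : ∀ θ, Function.Surjective (F θ)
  per  : ∀ θ x, F θ (x + 1) = F θ x + 1

/-- `ρ` is the fibered rotation number of the lift `F`. -/
def HasRotNum (ω : ℝ) (F : T1 → ℝ → ℝ) (ρ : ℝ) : Prop :=
  ∀ θ x, Tendsto (fun n : ℕ => (fiberIter ω F n θ x - x) / n) atTop (𝓝 ρ)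

/-- The skew-product map on `T¹ × ℝ` induced by the (fiber part of the) lift. -/
def skew (ω : ℝ) (F : T1 → ℝ → ℝ) : T1 × ℝ → T1 × ℝ :=
  fun p => (p.1 + (ω : T1), F p.1 p.2)

/-- An `F`-invariant strip: a compact invariant set all of whose fibers are nonempty
compact intervals. -/
def IsInvStrip (ω : ℝ) (F : T1 → ℝ → ℝ) (A : Set (T1 × ℝ)) : Prop :=
  IsCompact A ∧ skew ω F '' A = A ∧
    ∀ θ : T1, ∃ a b : ℝ, a ≤ b ∧ {x : ℝ | (θ, x) ∈ A} = Set.Icc a b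

namespace ML

variable {ω : ℝ} {F G : T1 → ℝ → ℝ}

lemma iter_zero (θ : T1) (x : ℝ) : fiberIter ω F 0 θ x = x := rfl

lemma iter_succ (n : ℕ) (θ : T1) (x : ℝ) :
    fiberIter ω F (n+1) θ x = fiberIter ω F n (θ + (ω : T1)) (F θ x) := rfl

lemma iter_one (θ : T1) (x : ℝ) : fiberIter ω F 1 θ x = F θ x := rfl

lemma iter_succ_right (n : ℕ) (θ : T1) (x : ℝ) :
    fiberIter ω F (n+1) θ x = F (θ + n • ((ω : T1))) (fiberIter ω F n θ x) := by
  induction n generalizing θ x with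
  | zero => simp [iter_succ, iter_zero]
  | succ n ih =>
      rw [iter_succ, ih, iter_succ]
      congr 1
      rw [add_assoc, ← succ_nsmul']

lemma iter_add (n m : ℕ) (θ : T1) (x : ℝ) :
    fiberIter ω F (n + m) θ x
      = fiberIter ω F m (θ + n • ((ω : T1))) (fiberIter ω F n θ x) := by
  induction n generalizing θ x with
  | zero => simp [iter_zero]
  | succ n ih =>
      have h1 : n + 1 + m = (n + m) + 1 := by ring
      rw [h1, iter_succ, ih, iter_succ, succ_nsmul', ← add_assoc]

lemma iter_mono (hm : ∀ θ, Monotone (F θ)) (n : ℕ) (θ : T1) :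
    Monotone (fiberIter ω F n θ) := by
  induction n generalizing θ with
  | zero => exact fun x y h => h
  | succ n ih => exact fun x y h => ih _ (hm θ h)

lemma per_nat (hp : ∀ θ x, F θ (x + 1) = F θ x + 1) (θ : T1) (x : ℝ) (k : ℕ) :
    F θ (x + k) = F θ x + k := by
  induction k with
  | zero => simp
  | succ k ih =>
      have : x + ((k:ℝ) + 1) = (x + k) + 1 := by ring
      push_cast
      rw [this, hp, ih]; ring

lemma per_int (hp : ∀ θ x, F θ (x + 1) = F θ x + 1) (θ : T1) (x : ℝ) (k : ℤ) :
    F θ (x + k) = F θ x + k := by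
  rcases Int.eq_nat_or_neg k with ⟨n, rfl | rfl⟩
  · push_cast; exact per_nat hp θ x n
  · have := per_nat hp θ (x - n) n
    have h2 : x - (n:ℝ) + n = x := by ring
    rw [h2] at this
    push_cast
    have h3 : x + -(n:ℝ) = x - n := by ring
    rw [h3]
    linarith

lemma iter_int (hp : ∀ θ x, F θ (x + 1) = F θ x + 1) (n : ℕ) (θ : T1) (x : ℝ) (k : ℤ) :
    fiberIter ω F n θ (x + k) = fiberIter ω F n θ x + k := by
  induction n generalizing θ x with
  | zero => rfl
  | succ n ih => rw [iter_succ, per_int hp, ih, iter_succ]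

lemma iter_cont (hc : Continuous fun p : T1 × ℝ => F p.1 p.2) (n : ℕ) :
    Continuous fun p : T1 × ℝ => fiberIter ω F n p.1 p.2 := by
  induction n with
  | zero => exact continuous_snd
  | succ n ih =>
      have : (fun p : T1 × ℝ => fiberIter ω F (n+1) p.1 p.2)
          = (fun p : T1 × ℝ => fiberIter ω F n p.1 p.2) ∘
            (fun p : T1 × ℝ => (p.1 + (ω : T1), F p.1 p.2)) := rfl
      rw [this]
      exact ih.comp ((continuous_fst.add continuous_const).prodMk hc)

lemma iter_le_iter (hFG : ∀ θ x, F θ x ≤ G θ x) (hmG : ∀ θ, Monotone (G θ))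
    (n : ℕ) (θ : T1) (x : ℝ) : fiberIter ω F n θ x ≤ fiberIter ω G n θ x := by
  induction n generalizing θ x with
  | zero => exact le_refl x
  | succ n ih =>
      rw [iter_succ, iter_succ]
      exact le_trans (ih _ _) (iter_mono hmG n _ (hFG θ x))

lemma iter_neg (hGH : ∀ θ x, G θ x = -(F θ (-x))) (n : ℕ) (θ : T1) (x : ℝ) :
    fiberIter ω G n θ x = -(fiberIter ω F n θ (-x)) := by
  induction n generalizing θ x with
  | zero => simp [iter_zero]
  | succ n ih =>
      rw [iter_succ, iter_succ, ih, hGH, neg_neg]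



lemma coe_int_zero (m : ℤ) : (((m : ℝ)) : T1) = 0 := by
  rw [AddCircle.coe_eq_zero_iff]
  exact ⟨m, by simp⟩

lemma coe_eq_of_sub_int {x y : ℝ} (m : ℤ) (h : x - y = m) : ((x : ℝ) : T1) = (y : T1) := by
  have h2 : (x : T1) - (y : T1) = 0 := by
    rw [← AddCircle.coe_sub, h]; exact coe_int_zero m
  have := sub_eq_zero.mp h2
  exact this

lemma norm_coe_le (x : ℝ) : ‖((x : ℝ) : T1)‖ ≤ |x| := by
  have h : ‖((x : ℝ) : T1)‖ = |x - round x| := UnitAddCircle.norm_eq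
  rw [h]
  simpa using round_le x 0

lemma coe_nat_mul (k : ℕ) (x : ℝ) : (((k : ℝ) * x : ℝ) : T1) = k • ((x : ℝ) : T1) := by
  induction k with
  | zero => simp
  | succ k ih =>
      push_cast
      rw [add_mul, one_mul, AddCircle.coe_add, ih, succ_nsmul]

lemma exists_rep_Ico (y : T1) : ∃ t : ℝ, (t : T1) = y ∧ 0 ≤ t ∧ t < 1 := by
  obtain ⟨r, rfl⟩ := QuotientAddGroup.mk_surjective y
  refine ⟨Int.fract r, ?_, Int.fract_nonneg r, Int.fract_lt_one r⟩
  refine coe_eq_of_sub_int (-⌊r⌋) ?_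
  rw [Int.fract]; push_cast; ring

lemma small_step {ω : ℝ} (hω : Irrational ω) {δ : ℝ} (hδ : 0 < δ) :
    ∃ n : ℕ, 1 ≤ n ∧ ‖(((n : ℝ) * ω : ℝ) : T1)‖ < δ ∧ (((n : ℝ) * ω : ℝ) : T1) ≠ 0 := by
  classical
  set L : ℕ := ⌈1/δ⌉₊ + 1 with hL
  have hLpos : 0 < L := Nat.succ_pos _
  have hLδ : 1 / (L : ℝ) < δ := by
    rw [div_lt_iff₀ (by exact_mod_cast hLpos)]
    have h1 : (1:ℝ)/δ ≤ (⌈1/δ⌉₊ : ℝ) := Nat.le_ceil _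
    have h2 : ((⌈1/δ⌉₊ : ℝ)) < L := by
      rw [hL]; push_cast; linarith
    calc (1:ℝ) = δ * (1/δ) := by field_simp
    _ ≤ δ * (⌈1/δ⌉₊:ℝ) := by nlinarith
    _ < δ * L := by nlinarith
  have hf : ∀ k : Fin (L+1), ⌊Int.fract ((k : ℕ) * ω) * L⌋₊ < L := by
    intro k
    rw [Nat.floor_lt (mul_nonneg (Int.fract_nonneg _) (by positivity))]
    calc Int.fract ((k:ℕ) * ω) * L < 1 * L := by
          apply mul_lt_mul_of_pos_right (Int.fract_lt_one _)
          exact_mod_cast hLpos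
    _ = L := one_mul _
  obtain ⟨k₁, k₂, hne, heq⟩ := Fintype.exists_ne_map_eq_of_card_lt
    (fun k : Fin (L+1) => (⟨⌊Int.fract ((k : ℕ) * ω) * L⌋₊, hf k⟩ : Fin L)) (by simp)
  -- wlog k₁ < k₂
  have key : ∀ k₁ k₂ : Fin (L+1), (k₁ : ℕ) < (k₂ : ℕ) →
      ⌊Int.fract ((k₁ : ℕ) * ω) * L⌋₊ = ⌊Int.fract ((k₂ : ℕ) * ω) * L⌋₊ →
      ∃ n : ℕ, 1 ≤ n ∧ ‖(((n : ℝ) * ω : ℝ) : T1)‖ < δ ∧ (((n : ℝ) * ω : ℝ) : T1) ≠ 0 := by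
    intro k₁ k₂ hlt hfe
    set a := Int.fract ((k₁:ℕ) * ω) with ha
    set b := Int.fract ((k₂:ℕ) * ω) with hb
    have hab : |b - a| < 1 / L := by
      have h1 : (⌊a * L⌋₊ : ℝ) ≤ a * L := Nat.floor_le (mul_nonneg (Int.fract_nonneg _) (by positivity))
      have h2 : a * L < ⌊a * L⌋₊ + 1 := Nat.lt_floor_add_one _
      have h3 : (⌊b * L⌋₊ : ℝ) ≤ b * L := Nat.floor_le (mul_nonneg (Int.fract_nonneg _) (by positivity))
      have h4 : b * L < ⌊b * L⌋₊ + 1 := Nat.lt_floor_add_one _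
      rw [hfe] at h1 h2
      have hLpos' : (0:ℝ) < L := by exact_mod_cast hLpos
      rw [abs_lt]
      constructor
      · have h5 : a - b < 1/L := by rw [lt_div_iff₀ hLpos']; nlinarith
        linarith
      · rw [lt_div_iff₀ hLpos']; nlinarith
    set n : ℕ := k₂ - k₁ with hn
    have hn1 : 1 ≤ n := by omega
    have hcast : ((n:ℝ)) = (k₂:ℕ) - (k₁:ℕ) := by
      rw [hn]; push_cast [Nat.cast_sub hlt.le]; ring
    have hcoe : (((n : ℝ) * ω : ℝ) : T1) = (((b - a : ℝ)) : T1) := by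
      apply coe_eq_of_sub_int (⌊(k₂:ℕ) * ω⌋ - ⌊(k₁:ℕ) * ω⌋)
      rw [ha, hb, Int.fract, Int.fract, hcast]
      push_cast; ring
    refine ⟨n, hn1, ?_, ?_⟩
    · rw [hcoe]
      calc ‖((b - a : ℝ) : T1)‖ ≤ |b - a| := norm_coe_le _
      _ < 1/L := hab
      _ < δ := hLδ
    · intro h0
      rw [AddCircle.coe_eq_zero_iff] at h0
      obtain ⟨m, hm⟩ := h0
      have : ω = (m : ℝ) / (n : ℝ) := by
        have hn0 : (n:ℝ) ≠ 0 := by positivity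
        field_simp
        simpa [zsmul_eq_mul, mul_comm] using hm.symm
      exact hω ⟨(m : ℚ) / (n : ℚ), by push_cast [this]; norm_num⟩
  rcases lt_or_gt_of_ne (fun h : (k₁:ℕ) = (k₂:ℕ) => hne (Fin.ext h)) with h | h
  · exact key k₁ k₂ h (by simpa using congrArg Fin.val heq)
  · exact key k₂ k₁ h (by simpa using (congrArg Fin.val heq).symm)

lemma walk {β : ℝ} (hβ0 : 0 < β) (y : T1) :
    ∃ k : ℕ, 1 ≤ k ∧ k ≤ ⌊1/β⌋₊ + 1 ∧ dist (k • ((β : ℝ) : T1)) y ≤ β := by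
  obtain ⟨t, hty, ht0, ht1⟩ := exists_rep_Ico y
  set k : ℕ := ⌊t/β⌋₊ + 1 with hk
  have hfl : (⌊t/β⌋₊ : ℝ) * β ≤ t := by
    have := Nat.floor_le (div_nonneg ht0 hβ0.le)
    calc (⌊t/β⌋₊ : ℝ) * β ≤ (t/β) * β := by nlinarith
    _ = t := by field_simp
  have hfu : t < (k : ℝ) * β := by
    have := Nat.lt_floor_add_one (t/β)
    rw [hk]; push_cast
    calc t = (t/β) * β := by field_simp
    _ < (⌊t/β⌋₊ + 1) * β := by nlinarith
  refine ⟨k, by omega, ?_, ?_⟩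
  · have : ⌊t/β⌋₊ ≤ ⌊1/β⌋₊ := Nat.floor_le_floor (by
      have h9 := ht1.le
      gcongr)
    omega
  · rw [← hty, ← coe_nat_mul, dist_eq_norm, ← AddCircle.coe_sub]
    have h1 : |(k:ℝ) * β - t| = (k:ℝ) * β - t := abs_of_pos (by linarith)
    have h2 : (k:ℝ) * β - t ≤ β := by
      have hkc : (k:ℝ) = (⌊t/β⌋₊ : ℝ) + 1 := by rw [hk]; push_cast; ring
      rw [hkc]; nlinarith
    calc ‖(((k:ℝ) * β - t : ℝ) : T1)‖ ≤ |(k:ℝ) * β - t| := norm_coe_le _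
    _ ≤ β := by rw [h1]; exact h2


lemma exists_net {ω : ℝ} (hω : Irrational ω) {δ : ℝ} (hδ : 0 < δ) :
    ∃ N : ℕ, 1 ≤ N ∧ ∀ y : T1, ∃ j : ℕ, 1 ≤ j ∧ j ≤ N ∧ dist (j • ((ω : ℝ) : T1)) y ≤ δ := by
  obtain ⟨n, hn1, hns, hnz⟩ := small_step hω hδ
  set x : T1 := (((n:ℝ) * ω : ℝ) : T1) with hx
  have hxsmul : x = n • ((ω : ℝ) : T1) := coe_nat_mul n ω
  obtain ⟨r, hr⟩ := QuotientAddGroup.mk_surjective x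
  set u : ℝ := r - round r with hu
  have hur : ((u : ℝ) : T1) = (r : T1) := coe_eq_of_sub_int (-(round r)) (by rw [hu]; push_cast; ring)
  have hrx : ((r : ℝ) : T1) = x := hr
  have hux : ((u : ℝ) : T1) = x := hur.trans hrx
  have hnorm : |u| = ‖x‖ := by
    rw [← hrx]; exact (UnitAddCircle.norm_eq (x := r)).symm
  have hult : |u| < δ := by rw [hnorm]; exact hns
  have hune : u ≠ 0 := by
    intro h
    apply hnz
    rw [← hux, h]; simp
  rcases lt_or_gt_of_ne hune with hneg | hpos
  · -- u < 0, use β := -u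
    set β : ℝ := -u with hβ
    have hβ0 : 0 < β := by rw [hβ]; linarith
    have hβδ : β < δ := by rw [hβ]; rw [abs_of_neg hneg] at hult; linarith
    refine ⟨(⌊1/β⌋₊ + 1) * n, Nat.mul_pos (Nat.succ_pos _) hn1, ?_⟩
    intro y
    obtain ⟨k, hk1, hkb, hkd⟩ := walk hβ0 (-y)
    refine ⟨k * n, Nat.mul_pos hk1 hn1, Nat.mul_le_mul_right n hkb, ?_⟩
    have hcoeβ : ((β : ℝ) : T1) = -((u : ℝ) : T1) := AddCircle.coe_neg _
    have : dist ((k*n) • ((ω : ℝ) : T1)) y = dist (k • ((β : ℝ) : T1)) (-y) := by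
      rw [hcoeβ, hux, smul_neg, dist_neg_neg, ← smul_smul, ← hxsmul]
    rw [this]
    exact hkd.trans hβδ.le
  · set β : ℝ := u with hβ
    have hβ0 : 0 < β := hpos
    have hβδ : β < δ := by rw [abs_of_pos hpos] at hult; exact hult
    refine ⟨(⌊1/β⌋₊ + 1) * n, Nat.mul_pos (Nat.succ_pos _) hn1, ?_⟩
    intro y
    obtain ⟨k, hk1, hkb, hkd⟩ := walk hβ0 y
    refine ⟨k * n, Nat.mul_pos hk1 hn1, Nat.mul_le_mul_right n hkb, ?_⟩
    have : dist ((k*n) • ((ω : ℝ) : T1)) y = dist (k • ((β : ℝ) : T1)) y := by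
      show dist ((k*n) • ((ω : ℝ) : T1)) y = dist (k • ((u : ℝ) : T1)) y
      rw [hux, ← smul_smul, ← hxsmul]
    rw [this]
    exact hkd.trans hβδ.le



lemma cont_fiber {ω : ℝ} {F : T1 → ℝ → ℝ} (hF : IsQpfLift ω F) (θ : T1) :
    Continuous (F θ) := by
  exact hF.cont.comp (continuous_const.prodMk continuous_id)

lemma strip_bound {ω : ℝ} {F : T1 → ℝ → ℝ} (hF : IsQpfLift ω F) {A : Set (T1 × ℝ)}
    (hA : IsInvStrip ω F A) :
    ∃ C : ℝ, 0 < C ∧ ∀ n θ x,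
      x - C ≤ fiberIter ω F n θ x ∧ fiberIter ω F n θ x ≤ x + C := by
  obtain ⟨hcomp, hinv, hfib⟩ := hA
  choose a b hab hIcc using hfib
  have hfiber : ∀ θ : T1, {x : ℝ | (θ + (ω:T1), x) ∈ A} = F θ '' {x | (θ, x) ∈ A} := by
    intro θ
    ext x
    simp only [Set.mem_setOf_eq, Set.mem_image]
    constructor
    · intro hx
      have hx2 : (θ + (ω:T1), x) ∈ skew ω F '' A := by rw [hinv]; exact hx
      obtain ⟨⟨θ', y⟩, hyA, hskew⟩ := hx2
      have hθ : θ' = θ := by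
        have h1 := congrArg Prod.fst hskew
        simp only [skew] at h1
        exact add_right_cancel h1
      subst hθ
      have h2 := congrArg Prod.snd hskew
      simp only [skew] at h2
      exact ⟨y, hyA, h2⟩
    · rintro ⟨y, hyA, rfl⟩
      have hmem : skew ω F (θ, y) ∈ skew ω F '' A := Set.mem_image_of_mem _ hyA
      rw [hinv] at hmem
      exact hmem
  have hb : ∀ θ, F θ (b θ) = b (θ + (ω:T1)) := by
    intro θ
    have h1 : Set.Icc (a (θ + (ω:T1))) (b (θ + (ω:T1))) = F θ '' Set.Icc (a θ) (b θ) := by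
      rw [← hIcc, ← hIcc]
      exact hfiber θ
    have hcont : ContinuousOn (F θ) (Set.Icc (a θ) (b θ)) := (cont_fiber hF θ).continuousOn
    have himg : F θ '' Set.Icc (a θ) (b θ) = Set.Icc (F θ (a θ)) (F θ (b θ)) := by
      apply Set.Subset.antisymm
      · rintro _ ⟨y, hy, rfl⟩
        exact ⟨(hF.mono θ).monotone hy.1, (hF.mono θ).monotone hy.2⟩
      · exact intermediate_value_Icc (hab θ) hcont
    rw [himg] at h1
    have hFab : F θ (a θ) ≤ F θ (b θ) := (hF.mono θ).monotone (hab θ)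
    have h2 := congrArg sSup h1
    rw [csSup_Icc (hab _), csSup_Icc hFab] at h2
    exact h2.symm
  obtain ⟨R, hR0, hRb⟩ : ∃ R : ℝ, 0 ≤ R ∧ ∀ θ, |b θ| ≤ R := by
    have hcs : IsCompact (Prod.snd '' A) := hcomp.image continuous_snd
    obtain ⟨M, hM⟩ := hcs.bddAbove
    obtain ⟨m, hm⟩ := hcs.bddBelow
    refine ⟨max (max M (-m)) 0, le_max_right _ _, fun θ => ?_⟩
    have hmem : (θ, b θ) ∈ A := by
      have : b θ ∈ {x : ℝ | (θ, x) ∈ A} := by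
        rw [hIcc θ]
        exact Set.right_mem_Icc.mpr (hab θ)
      exact this
    have hsnd : b θ ∈ Prod.snd '' A := ⟨(θ, b θ), hmem, rfl⟩
    have h1 : b θ ≤ M := hM hsnd
    have h2 : m ≤ b θ := hm hsnd
    rw [abs_le]
    constructor
    · have : -(max (max M (-m)) 0) ≤ -(-m) := by
        apply neg_le_neg
        exact le_trans (le_max_right M (-m)) (le_max_left _ _)
      simpa using le_trans this (by linarith)
    · exact le_trans h1 (le_trans (le_max_left M (-m)) (le_max_left _ _))
  have hiter : ∀ n (θ : T1), fiberIter ω F n θ (b θ) = b (θ + n • ((ω:T1))) := by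
    intro n
    induction n with
    | zero => intro θ; simp [iter_zero]
    | succ n ih =>
        intro θ
        rw [iter_succ, hb, ih, add_assoc, ← succ_nsmul']
  have hmono := fun (θ : T1) => (hF.mono θ).monotone
  refine ⟨2*R + 1, by linarith, fun n θ x => ⟨?_, ?_⟩⟩
  · set k : ℤ := ⌊x - b θ⌋ with hk
    have h1 : b θ + k ≤ x := by
      have := Int.floor_le (x - b θ)
      rw [hk]; linarith
    have h2 : x - 1 ≤ b θ + k := by
      have := Int.sub_one_lt_floor (x - b θ)
      rw [hk]; linarith
    have h3 : fiberIter ω F n θ (b θ + k) ≤ fiberIter ω F n θ x :=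
      iter_mono hmono n θ h1
    rw [iter_int hF.per, hiter] at h3
    have h4 : -R ≤ b (θ + n • ((ω:T1))) := by
      have := hRb (θ + n • ((ω:T1))); rw [abs_le] at this; linarith [this.1]
    have h5 : (k:ℝ) ≥ x - b θ - 1 := by
      have := Int.sub_one_lt_floor (x - b θ); rw [hk]; linarith
    have h6 : b θ ≤ R := by have := hRb θ; rw [abs_le] at this; linarith [this.2]
    linarith
  · set k : ℤ := ⌈x - b θ⌉ with hk
    have h1 : x ≤ b θ + k := by
      have := Int.le_ceil (x - b θ)
      rw [hk]; linarith
    have h3 : fiberIter ω F n θ x ≤ fiberIter ω F n θ (b θ + k) :=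
      iter_mono hmono n θ h1
    rw [iter_int hF.per, hiter] at h3
    have h4 : b (θ + n • ((ω:T1))) ≤ R := by
      have := hRb (θ + n • ((ω:T1))); rw [abs_le] at this; linarith [this.2]
    have h5 : (k:ℝ) ≤ x - b θ + 1 := by
      have := Int.ceil_lt_add_one (x - b θ); rw [hk]; linarith
    have h6 : -R ≤ b θ := by have := hRb θ; rw [abs_le] at this; linarith [this.1]
    linarith


section Bootstrap

variable {ω : ℝ} {F : T1 → ℝ → ℝ}

lemma disp_upper (hω : Irrational ω) (hF : IsQpfLift ω F)
    {C : ℝ} (hC : ∀ n θ x, x - C ≤ fiberIter ω F n θ x) (hC0 : 0 < C)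
    {ε : ℝ} (hε : 0 ≤ ε) (hlock : HasRotNum ω (fun θ x => F θ x + ε) 0) :
    ∃ K : ℝ, 0 < K ∧ ∀ n θ x, fiberIter ω (fun θ x => F θ x + ε) n θ x ≤ x + K := by
  set G : T1 → ℝ → ℝ := fun θ x => F θ x + ε with hG
  have hGm : ∀ θ, Monotone (G θ) := fun θ x y h => by
    simp only [hG]; have := (hF.mono θ).monotone h; linarith
  have hGper : ∀ θ x, G θ (x + 1) = G θ x + 1 := fun θ x => by
    simp only [hG, hF.per θ x]; ring
  have hGc : Continuous fun p : T1 × ℝ => G p.1 p.2 := hF.cont.add continuous_const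
  set e : ℕ → T1 → ℝ := fun n θ => fiberIter ω G n θ 0 with he
  have hecont : ∀ n, Continuous (e n) := fun n =>
    (iter_cont hGc n).comp (continuous_id.prodMk continuous_const)
  have helow : ∀ n θ, -C ≤ e n θ := by
    intro n θ
    have h1 : fiberIter ω F n θ 0 ≤ e n θ :=
      iter_le_iter (fun θ x => by simp only [hG]; linarith) hGm n θ 0
    have h2 := hC n θ 0
    linarith
  have hsuper : ∀ n m θ, e n θ + e m (θ + n • ((ω:T1))) - 1 ≤ e (n+m) θ := by
    intro n m θ
    have h1 : e (n+m) θ = fiberIter ω G m (θ + n • ((ω:T1))) (e n θ) := iter_add n m θ 0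
    set k : ℤ := ⌊e n θ⌋ with hk
    have h2 : (0:ℝ) + k ≤ e n θ := by
      have := Int.floor_le (e n θ); rw [hk]; linarith
    have h3 : fiberIter ω G m (θ + n • ((ω:T1))) ((0:ℝ) + k)
        ≤ fiberIter ω G m (θ + n • ((ω:T1))) (e n θ) := iter_mono hGm m _ h2
    rw [iter_int hGper] at h3
    have h4 : e n θ - 1 ≤ (k:ℝ) := by
      have := Int.sub_one_lt_floor (e n θ); rw [hk]; linarith
    rw [h1]
    calc e n θ + e m (θ + n • ((ω:T1))) - 1
        ≤ e m (θ + n • ((ω:T1))) + k := by linarith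
    _ = fiberIter ω G m (θ + n • ((ω:T1))) 0 + k := rfl
    _ ≤ _ := h3
  have hsup : ∀ n θ, e n θ ≤ C + 5 := by
    by_contra hcon
    push_neg at hcon
    obtain ⟨n₀, θ₀, hn₀⟩ := hcon
    have hn₀1 : 1 ≤ n₀ := by
      rcases Nat.eq_zero_or_pos n₀ with h | h
      · exfalso; rw [h] at hn₀; simp only [he, iter_zero] at hn₀; linarith
      · exact h
    obtain ⟨δU, hδU0, hδU⟩ := Metric.continuousAt_iff.mp (hecont n₀).continuousAt
      (ε := 1) one_pos
    obtain ⟨N, hN1, hNet⟩ := exists_net hω (δ := δU/2) (by linarith)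
    have hstep : ∀ k : ℕ, ∃ t : ℕ, k ≤ t ∧ t ≤ k * (N + n₀) ∧
        2*(k:ℝ) - (C+1) ≤ e t θ₀ := by
      intro k
      induction k with
      | zero => exact ⟨0, le_refl 0, by simp, by simp only [he, iter_zero]; push_cast; linarith⟩
      | succ k ih =>
          obtain ⟨t, hkt, htb, hte⟩ := ih
          set σ : T1 := θ₀ + t • ((ω:T1)) with hσ
          obtain ⟨j, hj1, hjN, hjd⟩ := hNet (θ₀ - σ)
          have hjball : dist (σ + j • ((ω:T1))) θ₀ < δU := by
            have heq : dist (σ + j • ((ω:T1))) θ₀ = dist (j • ((ω:T1))) (θ₀ - σ) := by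
              rw [dist_eq_norm, dist_eq_norm]
              congr 1
              abel
            rw [heq]
            linarith
          have hU : C + 4 < e n₀ (σ + j • ((ω:T1))) := by
            have := hδU hjball
            rw [Real.dist_eq, abs_lt] at this
            linarith [this.1]
          refine ⟨t + j + n₀, by omega, ?_, ?_⟩
          · have : t + j + n₀ ≤ k * (N + n₀) + (N + n₀) := by omega
            calc t + j + n₀ ≤ k * (N + n₀) + (N + n₀) := this
            _ = (k+1) * (N + n₀) := by ring
          · have h1 := hsuper (t + j) n₀ θ₀
            have h2 := hsuper t j θ₀
            have h3 : θ₀ + (t + j) • ((ω:T1)) = σ + j • ((ω:T1)) := by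
              rw [hσ, add_nsmul, add_assoc]
            rw [h3] at h1
            have h4 := helow j (θ₀ + t • ((ω:T1)))
            rw [← hσ] at h4
            have h5 : e j σ = e j (θ₀ + t • ((ω:T1))) := by rw [hσ]
            push_cast
            have h6 := helow j σ
            rw [← hσ] at h2
            linarith
    have hzero := hlock θ₀ 0
    simp only [sub_zero] at hzero
    have hpos : (0:ℝ) < 1 / (N + n₀) := by positivity
    have hev := Metric.tendsto_atTop.mp hzero (1 / (N + n₀)) hpos
    obtain ⟨n₁, hn₁⟩ := hev
    set k : ℕ := max n₁ (⌈C⌉₊ + 1) with hkdef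
    obtain ⟨t, hkt, htb, hte⟩ := hstep k
    have hkC : (C:ℝ) + 1 ≤ k := by
      have h1 : (⌈C⌉₊ : ℝ) ≥ C := Nat.le_ceil C
      have h2 : (⌈C⌉₊ + 1 : ℕ) ≤ k := le_max_right _ _
      have h3 : ((⌈C⌉₊ + 1 : ℕ) : ℝ) ≤ (k:ℝ) := by exact_mod_cast h2
      push_cast at h3
      linarith
    have htpos : 1 ≤ t := le_trans (le_trans (by omega : 1 ≤ k) hkt) (le_refl t)
    have ht1 : n₁ ≤ t := le_trans (le_max_left _ _) hkt
    have hclose := hn₁ t ht1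
    rw [Real.dist_eq, sub_zero, abs_lt] at hclose
    have hebig : (k:ℝ) ≤ e t θ₀ := by linarith
    have htr : (t:ℝ) ≤ (k:ℝ) * (N + n₀) := by exact_mod_cast htb
    have htposR : (0:ℝ) < t := by exact_mod_cast htpos
    have hNn : (0:ℝ) < ((N:ℝ) + n₀) := by positivity
    have hfrac : 1 / ((N:ℝ) + n₀) ≤ e t θ₀ / t := by
      rw [div_le_div_iff₀ hNn htposR]
      have hkpos : (0:ℝ) < k := by linarith
      nlinarith
    have hclose2 : e t θ₀ / t < 1 / ((N:ℝ)+n₀) := hclose.2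
    linarith
  refine ⟨C + 6, by linarith, fun n θ x => ?_⟩
  set k : ℤ := ⌈x⌉ with hk
  have h1 : x ≤ (0:ℝ) + k := by
    have := Int.le_ceil x; rw [hk]; linarith
  have h2 : fiberIter ω G n θ x ≤ fiberIter ω G n θ ((0:ℝ) + k) := iter_mono hGm n θ h1
  rw [iter_int hGper] at h2
  have h3 : (k:ℝ) ≤ x + 1 := by
    have := Int.ceil_lt_add_one x; rw [hk]; linarith
  have h4 := hsup n θ
  calc fiberIter ω G n θ x ≤ fiberIter ω G n θ 0 + k := h2
  _ = e n θ + k := rfl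
  _ ≤ x + (C + 6) := by linarith

end Bootstrap


section OneSided

def pmax (p : ℕ → T1 → ℝ) : ℕ → T1 → ℝ
  | 0 => p 0
  | n+1 => fun θ => max (pmax p n θ) (p (n+1) θ)

lemma pmax_cont {p : ℕ → T1 → ℝ} (hp : ∀ j, Continuous (p j)) (n : ℕ) :
    Continuous (pmax p n) := by
  induction n with
  | zero => exact hp 0
  | succ n ih => exact ih.max (hp (n+1))

lemma le_pmax {p : ℕ → T1 → ℝ} (n j : ℕ) (hj : j ≤ n) (θ : T1) : p j θ ≤ pmax p n θ := by
  induction n with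
  | zero =>
      obtain rfl : j = 0 := Nat.le_zero.mp hj
      exact le_refl _
  | succ n ih =>
      rcases Nat.lt_or_ge j (n+1) with h | h
      · exact le_trans (ih (by omega)) (le_max_left _ _)
      · obtain rfl : j = n + 1 := le_antisymm hj h
        exact le_max_right _ _

lemma pmax_le {p : ℕ → T1 → ℝ} {g : ℝ} (n : ℕ) (θ : T1) (h : ∀ j, p j θ ≤ g) :
    pmax p n θ ≤ g := by
  induction n with
  | zero => exact h 0
  | succ n ih => exact max_le ih (h (n+1))

def qmin (q : ℕ → T1 → ℝ) : ℕ → T1 → ℝ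
  | 0 => q 1
  | n+1 => fun θ => min (qmin q n θ) (q (n+2) θ)

lemma qmin_cont {q : ℕ → T1 → ℝ} (hq : ∀ j, Continuous (q j)) (n : ℕ) :
    Continuous (qmin q n) := by
  induction n with
  | zero => exact hq 1
  | succ n ih => exact ih.min (hq (n+2))

lemma qmin_le {q : ℕ → T1 → ℝ} (n j : ℕ) (h1 : 1 ≤ j) (h2 : j ≤ n+1) (θ : T1) :
    qmin q n θ ≤ q j θ := by
  induction n with
  | zero =>
      obtain rfl : j = 1 := le_antisymm h2 h1
      exact le_refl _
  | succ n ih =>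
      rcases Nat.lt_or_ge j (n+2) with h | h
      · exact le_trans (min_le_left _ _) (ih (by omega))
      · obtain rfl : j = n + 2 := le_antisymm h2 h
        exact min_le_right _ _

lemma le_qmin {q : ℕ → T1 → ℝ} (n : ℕ) (θ : T1) {b : ℝ}
    (h : ∀ j, 1 ≤ j → j ≤ n+1 → b ≤ q j θ) : b ≤ qmin q n θ := by
  induction n with
  | zero => exact h 1 (le_refl 1) (le_refl 1)
  | succ n ih =>
      exact le_min (ih fun j hj1 hj2 => h j hj1 (by omega)) (h (n+2) (by omega) (le_refl _))

variable {ω : ℝ} {F : T1 → ℝ → ℝ}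

lemma seed_rec {G : T1 → ℝ → ℝ} (u : T1 → ℝ) (j : ℕ) (θ : T1) :
    fiberIter ω G (j+1) ((θ + (ω:T1)) - (j+1) • ((ω:T1)))
        (u ((θ + (ω:T1)) - (j+1) • ((ω:T1))))
      = G θ (fiberIter ω G j (θ - j • ((ω:T1))) (u (θ - j • ((ω:T1))))) := by
  have h0 : (θ + (ω:T1)) - (j+1) • ((ω:T1)) = θ - j • ((ω:T1)) := by
    rw [succ_nsmul]; abel
  rw [h0, iter_succ_right]
  congr 1
  abel

lemma dist_sub_smul (θ θ₁ : T1) (j : ℕ) (v : T1) :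
    dist (θ - j • v) θ₁ = dist (j • v) (θ - θ₁) := by
  rw [dist_eq_norm, dist_eq_norm, ← norm_neg (j • v - (θ - θ₁))]
  congr 1
  abel

lemma one_sided (hω : Irrational ω) (hF : IsQpfLift ω F)
    {C : ℝ} (hC : ∀ n θ x, x - C ≤ fiberIter ω F n θ x) (hC0 : 0 < C)
    {ε : ℝ} (hε : 0 < ε) (hlock : HasRotNum ω (fun θ x => F θ x + ε) 0) :
    ∃ γ : T1 → ℝ, Continuous γ ∧ ∀ θ, F θ (γ θ) < γ (θ + (ω:T1)) := by
  classical
  haveI : Fact ((0:ℝ) < 1) := ⟨one_pos⟩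
  obtain ⟨K, hK0, hKb⟩ := disp_upper hω hF hC hC0 hε.le hlock
  set G : T1 → ℝ → ℝ := fun θ x => F θ x + ε with hG
  have hGm : ∀ θ, Monotone (G θ) := fun θ x y hxy => by
    simp only [hG]; have := (hF.mono θ).monotone hxy; linarith
  have hGc : Continuous fun pp : T1 × ℝ => G pp.1 pp.2 := hF.cont.add continuous_const
  have hGθc : ∀ θ, Continuous (G θ) := fun θ => (cont_fiber hF θ).add continuous_const
  set p : ℕ → T1 → ℝ := fun j θ => fiberIter ω G j (θ - j • ((ω:T1))) 0 with hp
  have hp0 : ∀ θ, p 0 θ = 0 := fun θ => rfl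
  have hpK : ∀ j θ, p j θ ≤ K := fun j θ => by
    have := hKb j (θ - j • ((ω:T1))) 0
    simpa using this
  have hpcont : ∀ j, Continuous (p j) := fun j =>
    (iter_cont hGc j).comp ((continuous_id.sub continuous_const).prodMk continuous_const)
  have hprec : ∀ j θ, p (j+1) (θ + (ω:T1)) = G θ (p j θ) := fun j θ =>
    seed_rec (fun _ => (0:ℝ)) j θ
  set ψ : T1 → ℝ := fun θ => ⨆ j, p j θ with hψ
  have hbdd : ∀ θ, BddAbove (Set.range fun j => p j θ) := fun θ =>
    ⟨K, by rintro _ ⟨j, rfl⟩; exact hpK j θ⟩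
  have hψ0 : ∀ θ, 0 ≤ ψ θ := fun θ => by
    have h1 := le_ciSup (hbdd θ) 0
    rw [hp0] at h1
    exact h1
  have hψK : ∀ θ, ψ θ ≤ K := fun θ => ciSup_le fun j => hpK j θ
  have hψle : ∀ j θ, p j θ ≤ ψ θ := fun j θ => le_ciSup (hbdd θ) j
  have hinv : ∀ θ, F θ (ψ θ) + ε ≤ ψ (θ + (ω:T1)) := by
    intro θ
    have hGψ : G θ (ψ θ) = ⨆ j, G θ (p j θ) :=
      Monotone.map_ciSup_of_continuousAt ((hGθc θ).continuousAt) (hGm θ) (hbdd θ)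
    have h2 : (⨆ j, G θ (p j θ)) ≤ ψ (θ + (ω:T1)) := by
      apply ciSup_le
      intro j
      rw [← hprec j θ]
      exact hψle (j+1) (θ + (ω:T1))
    have h3 : G θ (ψ θ) ≤ ψ (θ + (ω:T1)) := le_trans (le_of_eq hGψ) h2
    simpa [hG] using h3
  -- modulus of continuity
  obtain ⟨s, hs0, hs1, hsmod⟩ : ∃ s : ℝ, 0 < s ∧ s ≤ 1 ∧ ∀ (θ : T1) (u v : ℝ),
      -1 ≤ u → u ≤ K+1 → -1 ≤ v → v ≤ K+1 → |u - v| ≤ s → F θ u ≤ F θ v + ε/4 := by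
    have hScomp : IsCompact ((Set.univ : Set T1) ×ˢ Set.Icc (-1:ℝ) (K+1)) :=
      isCompact_univ.prod isCompact_Icc
    have hUC := hScomp.uniformContinuousOn_of_continuous hF.cont.continuousOn
    rw [Metric.uniformContinuousOn_iff] at hUC
    obtain ⟨d, hd0, hd⟩ := hUC (ε/4) (by linarith)
    refine ⟨min (d/2) 1, by positivity, min_le_right _ _, ?_⟩
    intro θ u v hu1 hu2 hv1 hv2 huv
    have hmem1 : ((θ, u) : T1 × ℝ) ∈ (Set.univ : Set T1) ×ˢ Set.Icc (-1:ℝ) (K+1) :=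
      ⟨trivial, hu1, hu2⟩
    have hmem2 : ((θ, v) : T1 × ℝ) ∈ (Set.univ : Set T1) ×ˢ Set.Icc (-1:ℝ) (K+1) :=
      ⟨trivial, hv1, hv2⟩
    have hdist : dist ((θ, u) : T1 × ℝ) ((θ, v) : T1 × ℝ) < d := by
      rw [Prod.dist_eq]
      have h1 : dist θ θ = 0 := dist_self θ
      have h2 : dist u v ≤ d/2 := by
        rw [Real.dist_eq]; exact le_trans huv (min_le_left _ _)
      rw [h1]
      have h3 : max 0 (dist u v) = dist u v := max_eq_right dist_nonneg
      rw [h3]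
      linarith
    have := hd _ hmem1 _ hmem2 hdist
    rw [Real.dist_eq, abs_lt] at this
    linarith [this.1]
  -- Baire category argument
  set δ : ℝ := min s 1 / 3 with hδdef
  have hmin01 : 0 < min s 1 := lt_min hs0 one_pos
  have hδ0 : 0 < δ := by rw [hδdef]; linarith
  have h3δ : 3*δ ≤ s := by
    have h1 : min s 1 ≤ s := min_le_left _ _
    rw [hδdef]; linarith
  have h2δ1 : 2*δ ≤ 1 := by
    have h1 : min s 1 ≤ 1 := min_le_right _ _
    rw [hδdef]; linarith
  set A : ℕ → Set T1 := fun n => ⋂ j, {θ | p j θ ≤ pmax p n θ + δ} with hA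
  have hAclosed : ∀ n, IsClosed (A n) := fun n =>
    isClosed_iInter fun j => isClosed_le (hpcont j) ((pmax_cont hpcont n).add continuous_const)
  have hAcover : (⋃ n, A n) = Set.univ := by
    ext θ
    simp only [Set.mem_iUnion, Set.mem_univ, iff_true]
    have h1 : ψ θ - δ < ⨆ j, p j θ := by
      have : ψ θ - δ < ψ θ := by linarith
      rw [hψ] at this ⊢
      exact this
    obtain ⟨j₀, hj₀⟩ := exists_lt_of_lt_ciSup h1
    refine ⟨j₀, Set.mem_iInter.mpr fun j => ?_⟩
    have h2 := hψle j θ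
    have h3 : p j₀ θ ≤ pmax p j₀ θ := le_pmax j₀ j₀ (le_refl _) θ
    simp only [Set.mem_setOf_eq]
    linarith
  obtain ⟨n₁, hint⟩ := nonempty_interior_of_iUnion_of_closed hAclosed hAcover
  obtain ⟨θ₁, hθ₁⟩ := hint
  obtain ⟨r₁, hr₁0, hr₁⟩ := Metric.isOpen_iff.mp isOpen_interior θ₁ hθ₁
  have hball : Metric.ball θ₁ r₁ ⊆ A n₁ := hr₁.trans interior_subset
  obtain ⟨r₂', hr₂'0, hr₂'⟩ := Metric.continuousAt_iff.mp (pmax_cont hpcont n₁).continuousAt δ hδ0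
  set r₂ : ℝ := min r₂' r₁ with hr₂def
  have hr₂0 : 0 < r₂ := lt_min hr₂'0 hr₁0
  set c : ℝ := pmax p n₁ θ₁ + 2*δ with hc
  have hF1 : ∀ θ, dist θ θ₁ < r₂ → ψ θ ≤ c ∧ c ≤ ψ θ + 3*δ := by
    intro θ hθ
    have hθr₁ : θ ∈ Metric.ball θ₁ r₁ :=
      Metric.mem_ball.mpr (lt_of_lt_of_le hθ (min_le_right _ _))
    have hmemA : θ ∈ A n₁ := hball hθr₁
    have hψA : ψ θ ≤ pmax p n₁ θ + δ := by
      apply ciSup_le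
      intro j
      exact Set.mem_iInter.mp hmemA j
    have hΨc : |pmax p n₁ θ - pmax p n₁ θ₁| < δ := by
      have := hr₂' (show dist θ θ₁ < r₂' from lt_of_lt_of_le hθ (min_le_left _ _))
      rwa [Real.dist_eq] at this
    rw [abs_lt] at hΨc
    have hΨψ : pmax p n₁ θ ≤ ψ θ := pmax_le n₁ θ (fun j => hψle j θ)
    constructor
    · rw [hc]; linarith [hΨc.2]
    · rw [hc]; linarith [hΨc.1]
  have hc0 : 2*δ ≤ c := by
    have h1 : p 0 θ₁ ≤ pmax p n₁ θ₁ := le_pmax n₁ 0 (Nat.zero_le _) θ₁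
    rw [hp0] at h1
    rw [hc]; linarith
  have hcK : c ≤ K + 1 := by
    have h1 : pmax p n₁ θ₁ ≤ K := pmax_le n₁ θ₁ (fun j => hpK j θ₁)
    rw [hc]; linarith
  set r : ℝ := r₂/4 with hrdef
  have hr0 : 0 < r := by rw [hrdef]; linarith
  set h : T1 → ℝ := fun θ => c + (K + 1) * min 1 (max 0 ((dist θ θ₁ - r) / r)) with hh
  have hhcont : Continuous h := by
    apply continuous_const.add
    apply continuous_const.mul
    exact continuous_const.min
      (continuous_const.max (((continuous_id.dist continuous_const).sub continuous_const).div_const r))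
  have hhge : ∀ θ, c ≤ h θ := by
    intro θ
    have h1 : 0 ≤ min 1 (max 0 ((dist θ θ₁ - r) / r)) :=
      le_min zero_le_one (le_max_left 0 _)
    have h2 : 0 ≤ (K + 1) * min 1 (max 0 ((dist θ θ₁ - r) / r)) :=
      mul_nonneg (by linarith) h1
    rw [hh]; simp only []; linarith
  have hhM : ∀ σ, dist σ θ₁ ≤ r → h σ = c := by
    intro σ hσ
    have h1 : (dist σ θ₁ - r)/r ≤ 0 :=
      div_nonpos_of_nonpos_of_nonneg (by linarith) hr0.le
    have h2 : max 0 ((dist σ θ₁ - r)/r) = 0 := max_eq_left h1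
    rw [hh]
    simp only [h2]
    rw [min_eq_right zero_le_one]
    ring
  have hH1 : ∀ θ, ψ θ ≤ h θ := by
    intro θ
    rcases lt_or_ge (dist θ θ₁) r₂ with hlt | hge
    · exact le_trans (hF1 θ hlt).1 (hhge θ)
    · have hmin : min 1 (max 0 ((dist θ θ₁ - r) / r)) = 1 := by
        apply min_eq_left
        rw [le_max_iff]
        right
        rw [le_div_iff₀ hr0, hrdef]
        linarith
      rw [hh]
      simp only [hmin]
      have := hψK θ
      linarith
  -- capped pieces estimate
  set Ft : T1 → ℝ → ℝ := fun θ x => F θ x + ε/2 with hFt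
  have hFtm : ∀ θ, Monotone (Ft θ) := fun θ x y hxy => by
    simp only [hFt]; have := (hF.mono θ).monotone hxy; linarith
  have hFtc : Continuous fun pp : T1 × ℝ => Ft pp.1 pp.2 := hF.cont.add continuous_const
  have hrr₂ : r < r₂ := by rw [hrdef]; linarith
  have hcap : ∀ σ, dist σ θ₁ ≤ r → ∀ j, 1 ≤ j →
      fiberIter ω Ft j σ c ≤ ψ (σ + j • ((ω:T1))) - ε/4 := by
    intro σ hσ j hj
    induction j with
    | zero => omega
    | succ j ih =>
        rcases Nat.eq_zero_or_pos j with rfl | hj1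
        · have hσψ := hF1 σ (lt_of_le_of_lt hσ hrr₂)
          have hcb : |c - ψ σ| ≤ s := by
            rw [abs_le]
            constructor
            · linarith [hσψ.1]
            · linarith [hσψ.2]
          have hmod := hsmod σ c (ψ σ) (by linarith) (by linarith)
            (by linarith [hψ0 σ]) (by linarith [hψK σ]) hcb
          have hinvσ := hinv σ
          show fiberIter ω Ft 1 σ c ≤ ψ (σ + 1 • ((ω:T1))) - ε/4
          rw [iter_one, one_nsmul]
          simp only [hFt]
          linarith
        · have ihh := ih hj1
          show fiberIter ω Ft (j+1) σ c ≤ ψ (σ + (j+1) • ((ω:T1))) - ε/4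
          rw [iter_succ_right]
          have h1 : Ft (σ + j • ((ω:T1))) (fiberIter ω Ft j σ c)
              ≤ Ft (σ + j • ((ω:T1))) (ψ (σ + j • ((ω:T1)))) :=
            hFtm _ (by linarith)
          have hinvσ := hinv (σ + j • ((ω:T1)))
          have hbase : σ + j • ((ω:T1)) + (ω:T1) = σ + (j+1) • ((ω:T1)) := by
            rw [succ_nsmul]
            abel
          rw [hbase] at hinvσ
          simp only [hFt] at h1 ⊢
          linarith
  -- covering and the final curve
  obtain ⟨N₂, hN₂1, hNet⟩ := exists_net hω hr0
  set q : ℕ → T1 → ℝ :=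
    fun j θ => fiberIter ω Ft j (θ - j • ((ω:T1))) (h (θ - j • ((ω:T1)))) with hq
  have hqcont : ∀ j, Continuous (q j) := by
    intro j
    have hbase : Continuous fun θ : T1 => θ - j • ((ω:T1)) :=
      continuous_id.sub continuous_const
    exact (iter_cont hFtc j).comp (hbase.prodMk (hhcont.comp hbase))
  have hqrec : ∀ j θ, q (j+1) (θ + (ω:T1)) = Ft θ (q j θ) := fun j θ => seed_rec h j θ
  set γ : T1 → ℝ := qmin q (N₂ - 1) with hγ
  have hγcont : Continuous γ := qmin_cont hqcont _
  have hN₂eq : N₂ - 1 + 1 = N₂ := by omega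
  have hγle : ∀ θ, γ θ ≤ h θ := by
    intro θ
    obtain ⟨j, hj1, hjN, hjd⟩ := hNet (θ - θ₁)
    have hσM : dist (θ - j • ((ω:T1))) θ₁ ≤ r := by
      rw [dist_sub_smul]
      exact hjd
    have hσc : h (θ - j • ((ω:T1))) = c := hhM _ hσM
    have hcapj : q j θ ≤ ψ θ - ε/4 := by
      have hthis := hcap (θ - j • ((ω:T1))) hσM j hj1
      have hback : θ - j • ((ω:T1)) + j • ((ω:T1)) = θ := by abel
      rw [hback] at hthis
      show fiberIter ω Ft j (θ - j • ((ω:T1))) (h (θ - j • ((ω:T1)))) ≤ ψ θ - ε/4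
      rw [hσc]
      exact hthis
    have hγq : γ θ ≤ q j θ := qmin_le (N₂-1) j hj1 (by omega) θ
    calc γ θ ≤ q j θ := hγq
    _ ≤ ψ θ - ε/4 := hcapj
    _ ≤ h θ := (sub_le_self _ (by linarith)).trans (hH1 θ)
  have hmain : ∀ θ, Ft θ (γ θ) ≤ γ (θ + (ω:T1)) := by
    intro θ
    apply le_qmin
    intro k hk1 hk2
    rcases Nat.lt_or_ge k 2 with h2 | h2
    · obtain rfl : k = 1 := by omega
      have hq1 : q 1 (θ + (ω:T1)) = Ft θ (h θ) := by
        have hthis := hqrec 0 θ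
        rw [hthis]
        congr 1
        show fiberIter ω Ft 0 (θ - 0 • ((ω:T1))) (h (θ - 0 • ((ω:T1)))) = h θ
        rw [iter_zero]
        congr 1
        rw [zero_nsmul, sub_zero]
      rw [hq1]
      exact hFtm θ (hγle θ)
    · obtain ⟨k', rfl⟩ : ∃ k', k = k' + 1 := ⟨k-1, by omega⟩
      rw [hqrec k' θ]
      apply hFtm θ
      exact qmin_le (N₂-1) k' (by omega) (by omega) θ
  refine ⟨γ, hγcont, fun θ => ?_⟩
  have hthis := hmain θ
  simp only [hFt] at hthis
  linarith

end OneSided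


section Mirror

variable {ω : ℝ} {F : T1 → ℝ → ℝ}

lemma mirror_lift (hF : IsQpfLift ω F) : IsQpfLift ω (fun θ x => -(F θ (-x))) where
  cont := (hF.cont.comp (continuous_fst.prodMk continuous_snd.neg)).neg
  mono := fun θ x y hxy => neg_lt_neg (hF.mono θ (neg_lt_neg hxy))
  surj := fun θ y => by
    obtain ⟨x, hx⟩ := hF.surj θ (-y)
    exact ⟨-x, by show -(F θ (-(-x))) = y; rw [neg_neg, hx, neg_neg]⟩
  per := fun θ x => by
    have h1 : F θ (-x + (-1:ℤ)) = F θ (-x) + (-1:ℤ) := per_int hF.per θ (-x) (-1)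
    push_cast at h1
    have h2 : -(x+1) = -x + (-1:ℝ) := by ring
    show -(F θ (-(x+1))) = -(F θ (-x)) + 1
    rw [h2, h1]
    ring

lemma rot_mirror {H G : T1 → ℝ → ℝ} (hGH : ∀ θ x, G θ x = -(H θ (-x)))
    (h : HasRotNum ω H 0) : HasRotNum ω G 0 := by
  intro θ x
  have h1 := h θ (-x)
  have heq : (fun n : ℕ => (fiberIter ω G n θ x - x)/n)
      = fun n : ℕ => -((fiberIter ω H n θ (-x) - (-x))/n) := by
    funext n
    rw [iter_neg hGH]
    ring
  rw [heq]
  simpa using h1.neg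

end Mirror

end ML

/-- Proposition 4.1, two-sided case: if `ρ(F) = 0`, there is an
`F`-invariant strip, and the rotation number is locked on both sides, then some iterate
of `F` maps a compact annular region bounded by continuous curves into its own interior. -/
theorem mode_locking_curves
    (ω : ℝ) (hω : Irrational ω)
    (F : T1 → ℝ → ℝ) (hF : IsQpfLift ω F)
    (hρ : HasRotNum ω F 0)
    (hstrip : ∃ A : Set (T1 × ℝ), IsInvStrip ω F A)
    (ε : ℝ) (hε : 0 < ε)
    (hlockp : HasRotNum ω (fun θ x => F θ x + ε) 0)
    (hlockm : HasRotNum ω (fun θ x => F θ x + (-ε)) 0) :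
    ∃ (N : ℕ), 1 ≤ N ∧ ∃ γm γp : T1 → ℝ,
      Continuous γm ∧ Continuous γp ∧ (∀ θ, γm θ < γp θ) ∧
      (∀ θ, γm (θ + N • (ω : T1)) < fiberIter ω F N θ (γm θ)) ∧
      (∀ θ, fiberIter ω F N θ (γp θ) < γp (θ + N • (ω : T1))) := by
  classical
  haveI : Fact ((0:ℝ) < 1) := ⟨one_pos⟩
  obtain ⟨A, hA⟩ := hstrip
  obtain ⟨C, hC0, hCb⟩ := ML.strip_bound hF hA
  obtain ⟨γp, hγpc, hγp⟩ := ML.one_sided hω hF (fun n θ x => (hCb n θ x).1) hC0 hε hlockp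
  set Fm : T1 → ℝ → ℝ := fun θ x => -(F θ (-x)) with hFm
  have hFmlift : IsQpfLift ω Fm := ML.mirror_lift hF
  have hFmGH : ∀ θ x, Fm θ x = -(F θ (-x)) := fun _ _ => rfl
  have hCm : ∀ n θ x, x - C ≤ fiberIter ω Fm n θ x := by
    intro n θ x
    rw [ML.iter_neg hFmGH]
    have := (hCb n θ (-x)).2
    linarith
  have hlockm' : HasRotNum ω (fun θ x => Fm θ x + ε) 0 := by
    apply ML.rot_mirror (H := fun θ x => F θ x + (-ε)) ?_ hlockm
    intro θ x
    simp only [hFm]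
    ring
  obtain ⟨γt, hγtc, hγt⟩ := ML.one_sided hω hFmlift hCm hC0 hε hlockm'
  set g : T1 → ℝ := fun θ => -γt θ - γp θ with hg
  have hgc : Continuous g := hγtc.neg.sub hγpc
  obtain ⟨θM, -, hθM⟩ := isCompact_univ.exists_isMaxOn
    Set.univ_nonempty hgc.continuousOn
  set k : ℤ := ⌈g θM⌉ + 1 with hk
  set γm : T1 → ℝ := fun θ => -γt θ - k with hγm
  have hkg : ∀ θ, g θ + 1 ≤ (k:ℝ) := by
    intro θ
    have h1 : g θ ≤ g θM := hθM (Set.mem_univ θ)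
    have h2 : g θM ≤ (⌈g θM⌉:ℝ) := Int.le_ceil _
    rw [hk]
    push_cast
    linarith
  refine ⟨1, le_refl 1, γm, γp, hγtc.neg.sub continuous_const, hγpc, ?_, ?_, ?_⟩
  · intro θ
    have := hkg θ
    show -γt θ - k < γp θ
    simp only [hg] at this
    linarith
  · intro θ
    show -γt (θ + 1 • ((ω:T1))) - k < fiberIter ω F 1 θ (-γt θ - k)
    rw [one_nsmul, ML.iter_one]
    have h1 := hγt θ
    have h3 : F θ (-γt θ - (k:ℝ)) = F θ (-γt θ) + ((-k : ℤ):ℝ) := by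
      rw [← ML.per_int hF.per θ (-γt θ) (-k)]
      congr 1
      push_cast
      ring
    push_cast at h3
    simp only [hFm] at h1
    rw [h3]
    linarith
  · intro θ
    rw [one_nsmul, ML.iter_one]
    exact hγp θ
end
end

section
/- Let f be a quasiperiodically forced circle homeomorphism over an irrational ω with lift F whose fibered rotation number is ρ. Suppose the deviations from the constant rotation are unbounded from above along some orbit: there exists (θ₀,x₀) ∈ T¹×ℝ with sup_{n∈ℕ} (F^n_{θ₀}(x₀) − x₀ − nρ) = +∞. Then for every ε > 0 there exists an integer M ≥ 1 such that for all θ ∈ T¹, x ∈ ℝ and n ∈ ℕ one has (F_ε)^{nM}_θ(x) − x ≥ n(Mρ + 1). In particular, if F_ε has a fibered rotation number ρ₊, then ρ₊ ≥ ρ + 1/M > ρ. -/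
open Filter Topology MeasureTheory
open scoped ENNReal

noncomputable section

/-! ### Auxiliary lemmas -/

section Aux
variable {ω : ℝ} {G : T1 → ℝ → ℝ}

lemma iter_succ (n : ℕ) (θ : T1) (x : ℝ) :
    fiberIter ω G (n+1) θ x = fiberIter ω G n (θ + (ω : T1)) (G θ x) := rfl

lemma iter_add (m n : ℕ) (θ : T1) (x : ℝ) :
    fiberIter ω G (m + n) θ x
      = fiberIter ω G n (θ + m • ((ω : ℝ) : T1)) (fiberIter ω G m θ x) := by
  induction m generalizing θ x with
  | zero => simp [fiberIter]
  | succ m ih =>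
    have h1 : m + 1 + n = (m + n) + 1 := by omega
    have h2 : θ + (ω:T1) + m • ((ω:ℝ):T1) = θ + (m+1) • ((ω:ℝ):T1) := by
      rw [succ_nsmul]; abel
    rw [h1, iter_succ, ih, h2, iter_succ]

lemma iter_mono (hm : ∀ θ, Monotone (G θ)) (n : ℕ) (θ : T1) :
    Monotone (fiberIter ω G n θ) := by
  induction n generalizing θ with
  | zero => exact monotone_id
  | succ n ih =>
    intro x y h
    rw [iter_succ, iter_succ]
    exact ih _ (hm θ h)

lemma map_int (hp : ∀ θ x, G θ (x+1) = G θ x + 1) (θ : T1) (x : ℝ) (k : ℤ) :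
    G θ (x + k) = G θ x + k := by
  induction k using Int.induction_on with
  | zero => simp
  | succ n ih =>
    have h : x + ((n:ℤ)+1:ℤ) = (x + (n:ℤ)) + 1 := by push_cast; ring
    rw [h, hp, ih]; push_cast; ring
  | pred n ih =>
    have h := hp θ (x + (-(n:ℤ)-1:ℤ))
    have h2 : x + (-(n:ℤ)-1:ℤ) + 1 = x + (-(n:ℤ):ℤ) := by push_cast; ring
    rw [h2, ih] at h
    have := h.symm
    push_cast at this ⊢
    linarith

lemma iter_int (hp : ∀ θ x, G θ (x+1) = G θ x + 1) (n : ℕ) (θ : T1) (x : ℝ) (k : ℤ) :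
    fiberIter ω G n θ (x + k) = fiberIter ω G n θ x + k := by
  induction n generalizing θ x with
  | zero => simp [fiberIter]
  | succ n ih => rw [iter_succ, iter_succ, map_int hp, ih]

lemma iter_spread (hm : ∀ θ, Monotone (G θ)) (hp : ∀ θ x, G θ (x+1) = G θ x + 1)
    (n : ℕ) (θ : T1) (x y : ℝ) :
    fiberIter ω G n θ y - y - 1 ≤ fiberIter ω G n θ x - x := by
  set m : ℤ := ⌈x - y⌉ with hm'
  have h1 : x - y ≤ m := Int.le_ceil _
  have h2 : (m:ℝ) - 1 ≤ x - y := by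
    have := Int.ceil_lt_add_one (x - y); push_cast; linarith
  have hx : y + ((m - 1 : ℤ) : ℝ) ≤ x := by push_cast; linarith
  have h3 := iter_mono (ω := ω) hm n θ hx
  rw [iter_int hp] at h3
  push_cast at h3
  linarith

lemma iter_le_eps (hm : ∀ θ, Monotone (G θ)) {ε : ℝ} (hε : 0 ≤ ε) (n : ℕ) (θ : T1) (x : ℝ) :
    fiberIter ω G n θ x ≤ fiberIter ω (fun θ x => G θ x + ε) n θ x := by
  have hmε : ∀ θ, Monotone (fun x => G θ x + ε) := fun θ a b h => by
    simp only [add_le_add_iff_right]; exact hm θ h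
  induction n generalizing θ x with
  | zero => exact le_rfl
  | succ n ih =>
    rw [iter_succ, iter_succ]
    calc fiberIter ω G n (θ + (ω:T1)) (G θ x)
        ≤ fiberIter ω (fun θ x => G θ x + ε) n (θ + (ω:T1)) (G θ x) := ih _ _
      _ ≤ fiberIter ω (fun θ x => G θ x + ε) n (θ + (ω:T1)) (G θ x + ε) :=
          iter_mono hmε n _ (by linarith)

lemma iter_shadow (hm : ∀ θ, Monotone (G θ)) {ε δ : ℝ}
    (hδ : ∀ (θ₁ θ₂ : T1) (y : ℝ), dist θ₁ θ₂ ≤ δ → G θ₂ y ≤ G θ₁ y + ε)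
    (n : ℕ) (θ₁ θ₂ : T1) (y : ℝ) (h : dist θ₁ θ₂ ≤ δ) :
    fiberIter ω G n θ₂ y ≤ fiberIter ω (fun θ x => G θ x + ε) n θ₁ y := by
  have hmε : ∀ θ, Monotone (fun x => G θ x + ε) := fun θ a b h => by
    simp only [add_le_add_iff_right]; exact hm θ h
  induction n generalizing θ₁ θ₂ y with
  | zero => exact le_rfl
  | succ n ih =>
    rw [iter_succ, iter_succ]
    calc fiberIter ω G n (θ₂ + (ω:T1)) (G θ₂ y)
        ≤ fiberIter ω (fun θ x => G θ x + ε) n (θ₁ + (ω:T1)) (G θ₂ y) :=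
          ih _ _ _ (by rwa [dist_add_right])
      _ ≤ fiberIter ω (fun θ x => G θ x + ε) n (θ₁ + (ω:T1)) (G θ₁ y + ε) :=
          iter_mono hmε n _ (hδ θ₁ θ₂ y h)

lemma iter_cont (hc : Continuous fun p : T1 × ℝ => G p.1 p.2) (n : ℕ) :
    Continuous fun p : T1 × ℝ => fiberIter ω G n p.1 p.2 := by
  induction n with
  | zero => exact continuous_snd
  | succ n ih =>
    have heq : (fun p : T1 × ℝ => fiberIter ω G (n+1) p.1 p.2)
        = (fun p : T1 × ℝ => fiberIter ω G n p.1 p.2)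
          ∘ (fun p : T1 × ℝ => (p.1 + (ω:T1), G p.1 p.2)) := rfl
    rw [heq]
    exact ih.comp ((continuous_fst.add continuous_const).prodMk hc)

lemma fract_decomp (x : ℝ) : x = Int.fract x + ((⌊x⌋ : ℤ) : ℝ) := by
  rw [Int.fract]; ring

lemma iter_lower (hc : Continuous fun p : T1 × ℝ => G p.1 p.2)
    (hp : ∀ θ x, G θ (x+1) = G θ x + 1) (n : ℕ) :
    ∃ B : ℝ, ∀ (θ : T1) (x : ℝ), B ≤ fiberIter ω G n θ x - x := by
  have hs : IsCompact ((Set.univ : Set T1) ×ˢ Set.Icc (0:ℝ) 1) :=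
    isCompact_univ.prod isCompact_Icc
  obtain ⟨p₀, hp₀, hmin⟩ := hs.exists_isMinOn ⟨(0, 0), by simp⟩
    (((iter_cont hc n).sub continuous_snd).continuousOn
      (s := (Set.univ : Set T1) ×ˢ Set.Icc (0:ℝ) 1))
  refine ⟨fiberIter ω G n p₀.1 p₀.2 - p₀.2, fun θ x => ?_⟩
  have hx : (θ, Int.fract x) ∈ (Set.univ : Set T1) ×ˢ Set.Icc (0:ℝ) 1 :=
    ⟨Set.mem_univ _, ⟨Int.fract_nonneg x, (Int.fract_lt_one x).le⟩⟩
  have h1 := isMinOn_iff.mp hmin _ hx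
  have h2 : fiberIter ω G n θ x - x
      = fiberIter ω G n θ (Int.fract x) - Int.fract x := by
    conv_lhs => rw [fract_decomp x]
    rw [iter_int hp]
    ring
  rw [h2]; exact h1

lemma unif (hc : Continuous fun p : T1 × ℝ => G p.1 p.2)
    (hp : ∀ θ x, G θ (x+1) = G θ x + 1) {ε : ℝ} (hε : 0 < ε) :
    ∃ δ > 0, ∀ (θ₁ θ₂ : T1) (y : ℝ), dist θ₁ θ₂ ≤ δ → G θ₂ y ≤ G θ₁ y + ε := by
  set Φ : (T1 × T1) × ℝ → ℝ := fun q => G q.1.2 q.2 - G q.1.1 q.2 with hΦdef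
  have hΦ : Continuous Φ := by
    apply Continuous.sub
    · exact hc.comp ((continuous_snd.comp continuous_fst).prodMk continuous_snd)
    · exact hc.comp ((continuous_fst.comp continuous_fst).prodMk continuous_snd)
  set s : Set ((T1 × T1) × ℝ) := Set.univ ×ˢ Set.Icc (0:ℝ) 1 with hsdef
  have hs : IsCompact s := isCompact_univ.prod isCompact_Icc
  have hu := Metric.uniformContinuousOn_iff.mp
    (hs.uniformContinuousOn_of_continuous hΦ.continuousOn) ε hε
  obtain ⟨δ, hδ, h⟩ := hu
  refine ⟨δ/2, by linarith, fun θ₁ θ₂ y hdist => ?_⟩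
  have key : G θ₂ y - G θ₁ y = G θ₂ (Int.fract y) - G θ₁ (Int.fract y) := by
    conv_lhs => rw [fract_decomp y]
    rw [map_int hp, map_int hp]
    ring
  have m1 : ((θ₁, θ₂), Int.fract y) ∈ s :=
    ⟨Set.mem_univ _, ⟨Int.fract_nonneg y, (Int.fract_lt_one y).le⟩⟩
  have m2 : ((θ₁, θ₁), Int.fract y) ∈ s :=
    ⟨Set.mem_univ _, ⟨Int.fract_nonneg y, (Int.fract_lt_one y).le⟩⟩
  have hd : dist (((θ₁, θ₂), Int.fract y) : (T1×T1)×ℝ) (((θ₁, θ₁), Int.fract y)) < δ := by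
    have h0 : (0:ℝ) ≤ dist θ₂ θ₁ := dist_nonneg
    have heq : dist (((θ₁, θ₂), Int.fract y) : (T1×T1)×ℝ) (((θ₁, θ₁), Int.fract y))
        = dist θ₂ θ₁ := by
      rw [Prod.dist_eq, Prod.dist_eq]
      simp only [dist_self]
      rw [max_eq_right h0, max_eq_left h0]
    rw [heq, dist_comm]
    linarith
  have h3 := h _ m1 _ m2 hd
  have h4 : Φ ((θ₁, θ₁), Int.fract y) = 0 := by simp [hΦdef]
  rw [Real.dist_eq, h4, sub_zero] at h3
  have h5 : G θ₂ (Int.fract y) - G θ₁ (Int.fract y) < ε := (abs_lt.mp h3).2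
  have h6 : G θ₂ y - G θ₁ y < ε := by rw [key]; exact h5
  linarith

end Aux

/-! ### Minimality of the irrational rotation -/

lemma coe_int_zero (k : ℤ) : (((k:ℝ)) : T1) = 0 := by
  rw [AddCircle.coe_eq_zero_iff]; exact ⟨k, by simp⟩

lemma nsmul_coe (m : ℕ) (a : ℝ) : m • ((a : ℝ) : T1) = ((m * a : ℝ) : T1) := by
  induction m with
  | zero => simp
  | succ m ih =>
    rw [succ_nsmul, ih, ← AddCircle.coe_add]
    have : (m : ℝ) * a + a = (↑(m+1)) * a := by push_cast; ring
    rw [this]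

lemma norm_coe_small {x : ℝ} (hx : |x| ≤ 1/2) : ‖(x : T1)‖ = |x| :=
  (AddCircle.norm_coe_eq_abs_iff (1:ℝ) one_ne_zero).mpr (by simpa using hx)

/-- Walk lemma: positive step case. -/
lemma walk_pos {v : T1} {v' η : ℝ} (h1 : (v' : T1) = v) (h2 : 0 < v') (h3 : v' < η)
    (hη : η ≤ 1/3) (y : T1) :
    ∃ t : ℕ, t ≤ ⌈1/v'⌉₊ ∧ dist ((t : ℕ) • v) y < η := by
  obtain ⟨z₀, rfl⟩ := QuotientAddGroup.mk_surjective y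
  set z : ℝ := Int.fract z₀ with hz
  have hzy : ((z : ℝ) : T1) = (z₀ : T1) := by
    have h : z = z₀ + ((-⌊z₀⌋ : ℤ) : ℝ) := by rw [hz, Int.fract]; push_cast; ring
    rw [h, AddCircle.coe_add, coe_int_zero, add_zero]
  have hz0 : 0 ≤ z := Int.fract_nonneg z₀
  have hz1 : z < 1 := Int.fract_lt_one z₀
  set t : ℕ := ⌊z / v'⌋₊ with ht
  have htle : (t : ℝ) ≤ z / v' := Nat.floor_le (by positivity)
  have htlt : z / v' < t + 1 := Nat.lt_floor_add_one _
  have hlow : (t:ℝ) * v' ≤ z := by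
    rw [← le_div_iff₀ h2]; exact htle
  have hhigh : z < ((t:ℝ) + 1) * v' := by
    rw [← div_lt_iff₀ h2]; exact htlt
  refine ⟨t, ?_, ?_⟩
  · have hd : z / v' ≤ 1 / v' := by gcongr <;> linarith
    have : (t : ℝ) ≤ (⌈1/v'⌉₊ : ℝ) := le_trans htle (le_trans hd (Nat.le_ceil _))
    exact_mod_cast this
  · have hveq : (t : ℕ) • v = (((t:ℝ) * v' : ℝ) : T1) := by
      rw [← h1, nsmul_coe]
    rw [hveq, ← hzy, dist_eq_norm, ← AddCircle.coe_sub]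
    have habs : |(t:ℝ) * v' - z| ≤ 1/2 := by
      rw [abs_le]; constructor <;> nlinarith
    rw [norm_coe_small habs]
    rw [abs_sub_comm, abs_of_nonneg (by linarith)]
    nlinarith

lemma walk {v : T1} {v' η : ℝ} (h1 : (v' : T1) = v) (h2 : v' ≠ 0) (h3 : |v'| < η)
    (hη : η ≤ 1/3) (y : T1) :
    ∃ t : ℕ, t ≤ ⌈1/|v'|⌉₊ ∧ dist ((t : ℕ) • v) y < η := by
  rcases lt_or_gt_of_ne h2 with hneg | hpos
  · have h1' : ((-v' : ℝ) : T1) = -v := by rw [AddCircle.coe_neg, h1]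
    have h2' : (0:ℝ) < -v' := by linarith
    have h3' : -v' < η := by rw [abs_of_neg hneg] at h3; linarith
    obtain ⟨t, htT, htd⟩ := walk_pos h1' h2' h3' hη (-y)
    refine ⟨t, by rwa [abs_of_neg hneg], ?_⟩
    have heq2 : (t : ℕ) • (-v) = -((t:ℕ) • v) := by rw [smul_neg]
    rw [heq2] at htd
    rwa [dist_neg_neg] at htd
  · obtain ⟨t, htT, htd⟩ := walk_pos h1 hpos (by rwa [abs_of_pos hpos] at h3) hη y
    exact ⟨t, by rwa [abs_of_pos hpos], htd⟩

lemma visits {ω : ℝ} (hω : Irrational ω) {δ : ℝ} (hδ : 0 < δ) (θ₀ : T1) :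
    ∃ K : ℕ, ∀ θ : T1, ∃ k ≤ K, dist (θ + (k : ℕ) • ((ω : ℝ) : T1)) θ₀ < δ := by
  set η : ℝ := min (δ/2) (1/3) with hηdef
  have hη0 : 0 < η := lt_min (by linarith) (by norm_num)
  have hη3 : η ≤ 1/3 := min_le_right _ _
  have hηδ : η ≤ δ/2 := min_le_left _ _
  obtain ⟨a, -, φ, hφ, hconv⟩ := isCompact_univ.tendsto_subseq
    (x := fun k : ℕ => (k : ℕ) • ((ω : ℝ) : T1)) (fun n => Set.mem_univ _)
  obtain ⟨N, hN⟩ := Metric.tendsto_atTop.mp hconv (η/2) (by linarith)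
  have hk12 : φ N < φ (N+1) := hφ (Nat.lt_succ_self N)
  set k₁ := φ N
  set k₂ := φ (N+1)
  have hd12 : dist ((k₂ : ℕ) • ((ω : ℝ) : T1)) ((k₁ : ℕ) • ((ω : ℝ) : T1)) < η := by
    have d1 := hN N (le_refl N)
    have d2 := hN (N+1) (Nat.le_succ N)
    calc dist ((k₂ : ℕ) • ((ω : ℝ) : T1)) ((k₁ : ℕ) • ((ω : ℝ) : T1))
        ≤ dist ((k₂ : ℕ) • ((ω : ℝ) : T1)) a + dist a ((k₁ : ℕ) • ((ω : ℝ) : T1)) :=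
          dist_triangle _ _ _
      _ < η/2 + η/2 := by
          rw [dist_comm a]
          exact add_lt_add d2 d1
      _ = η := by ring
  set m : ℕ := k₂ - k₁ with hm
  have hm1 : 1 ≤ m := by omega
  set v : T1 := (m : ℕ) • ((ω : ℝ) : T1) with hv
  have hvnorm : ‖v‖ < η := by
    have hsum : (m : ℕ) • ((ω : ℝ) : T1) + (k₁ : ℕ) • ((ω : ℝ) : T1)
        = (k₂ : ℕ) • ((ω : ℝ) : T1) := by
      rw [← add_nsmul]
      congr 1
      omega
    have hveq : v = (k₂ : ℕ) • ((ω : ℝ) : T1) - (k₁ : ℕ) • ((ω : ℝ) : T1) := by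
      rw [hv, eq_sub_iff_add_eq, hsum]
    rw [hveq, ← dist_eq_norm]
    exact hd12
  have hvne : v ≠ 0 := by
    rw [hv, nsmul_coe]
    intro hcon
    rw [AddCircle.coe_eq_zero_iff] at hcon
    obtain ⟨n, hn⟩ := hcon
    have heq3 : (m : ℝ) * ω = (n : ℝ) := by rw [← hn]; simp
    have hmne : (m : ℝ) ≠ 0 := by positivity
    have heq4 : ω = ((n : ℚ) / (m : ℚ) : ℚ) := by
      push_cast
      field_simp at heq3 ⊢
      linarith [heq3]
    exact hω ⟨_, heq4.symm⟩
  obtain ⟨x, hx⟩ := QuotientAddGroup.mk_surjective v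
  set v' : ℝ := x - round x with hv'
  have hv'coe : ((v' : ℝ) : T1) = v := by
    have h : v' = x + ((-round x : ℤ) : ℝ) := by rw [hv']; push_cast; ring
    rw [h, AddCircle.coe_add, coe_int_zero, add_zero, hx]
  have hv'norm : |v'| = ‖v‖ := by
    rw [← hx, AddCircle.norm_eq]
    simp [hv']
  have hv'ne : v' ≠ 0 := by
    intro hcon
    apply hvne
    rw [← hv'coe, hcon]
    simp
  have hv'η : |v'| < η := by rw [hv'norm]; exact hvnorm
  refine ⟨⌈1/|v'|⌉₊ * m, fun θ => ?_⟩
  obtain ⟨t, htT, htd⟩ := walk hv'coe hv'ne hv'η hη3 (θ₀ - θ)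
  refine ⟨t * m, Nat.mul_le_mul_right m htT, ?_⟩
  have hsm : (t * m : ℕ) • ((ω : ℝ) : T1) = (t : ℕ) • v := by
    rw [hv, smul_smul]
  rw [hsm]
  have hshift : dist (θ + (t : ℕ) • v) θ₀ = dist ((t : ℕ) • v) (θ₀ - θ) := by
    have h : θ + (θ₀ - θ) = θ₀ := by abel
    rw [← h, dist_add_left, h]
  rw [hshift]
  calc dist ((t : ℕ) • v) (θ₀ - θ) < η := htd
    _ ≤ δ/2 := hηδ
    _ < δ := by linarith

/-- Lemma 3.1: if the deviations from the constant rotation are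
unbounded from above along some orbit, then the rotation number is strictly monotone
from above at `f`. -/
theorem rho_unbounded_strictly_monotone
    (ω : ℝ) (hω : Irrational ω)
    (F : T1 → ℝ → ℝ) (hF : IsQpfLift ω F)
    (ρ : ℝ) (hρ : HasRotNum ω F ρ)
    (hunb : ∃ (θ₀ : T1) (x₀ : ℝ), ∀ C : ℝ, ∃ n : ℕ,
      C < fiberIter ω F n θ₀ x₀ - x₀ - n * ρ)
    (ε : ℝ) (hε : 0 < ε) :
    ∃ M : ℕ, 1 ≤ M ∧
      (∀ (θ : T1) (x : ℝ) (n : ℕ),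
        (n : ℝ) * ((M : ℝ) * ρ + 1) ≤ fiberIter ω (fun θ x => F θ x + ε) (n * M) θ x - x) ∧
      (∀ ρp : ℝ, HasRotNum ω (fun θ x => F θ x + ε) ρp → ρ + 1 / (M : ℝ) ≤ ρp) := by
  obtain ⟨θ₀, x₀, hub⟩ := hunb
  have hFm : ∀ θ, Monotone (F θ) := fun θ => (hF.mono θ).monotone
  have hFp := hF.per
  have hFc := hF.cont
  obtain ⟨δ, hδ0, hδ⟩ := unif hFc hFp hε
  obtain ⟨K, hK⟩ := visits hω hδ0 θ₀
  have hBex : ∀ k : ℕ, ∃ B : ℝ, ∀ θ x, B ≤ fiberIter ω F k θ x - x :=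
    fun k => iter_lower hFc hFp k
  choose Bf hBf using hBex
  set B : ℝ := (Finset.range (K+1)).inf' ⟨0, by simp⟩ (fun k => Bf k - k * ρ) with hBdef
  have hB : ∀ k, k ≤ K → ∀ (θ : T1) (x : ℝ), x + k * ρ + B ≤ fiberIter ω F k θ x := by
    intro k hk θ x
    have h1 : B ≤ Bf k - k * ρ :=
      Finset.inf'_le _ (Finset.mem_range.mpr (by omega))
    have h2 := hBf k θ x
    linarith
  obtain ⟨n₀, hn₀⟩ := hub (max (2 - 2*B) 0)
  have hC2 : 2 - 2*B < fiberIter ω F n₀ θ₀ x₀ - x₀ - n₀ * ρ :=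
    lt_of_le_of_lt (le_max_left _ _) hn₀
  have hn₀pos : 1 ≤ n₀ := by
    rcases Nat.eq_zero_or_pos n₀ with h0 | h
    · exfalso
      subst h0
      have h1 : fiberIter ω F 0 θ₀ x₀ = x₀ := rfl
      rw [h1] at hn₀
      simp only [Nat.cast_zero, zero_mul, sub_self, sub_zero] at hn₀
      have := le_max_right (2-2*B) (0:ℝ)
      linarith
    · exact h
  have key0 : True := trivial
  have parta : ∀ (θ : T1) (x : ℝ) (n : ℕ),
      (n : ℝ) * (((K + n₀ : ℕ) : ℝ) * ρ + 1)
        ≤ fiberIter ω (fun θ x => F θ x + ε) (n * (K + n₀)) θ x - x := by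
    have key : ∀ (θ : T1) (x : ℝ),
        x + ((K + n₀ : ℕ) : ℝ) * ρ + 1 ≤ fiberIter ω (fun θ x => F θ x + ε) (K + n₀) θ x := by
      intro θ x
      obtain ⟨k, hkK, hkd⟩ := hK θ
      have heq : fiberIter ω (fun θ x => F θ x + ε) (K + n₀) θ x
          = fiberIter ω (fun θ x => F θ x + ε) (K - k)
              ((θ + k • ((ω : ℝ):T1)) + n₀ • ((ω : ℝ):T1))
              (fiberIter ω (fun θ x => F θ x + ε) n₀ (θ + k • ((ω : ℝ):T1))
                (fiberIter ω (fun θ x => F θ x + ε) k θ x)) := by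
        conv_lhs => rw [show K + n₀ = k + (n₀ + (K - k)) by omega]
        rw [iter_add, iter_add]
      set x1 : ℝ := fiberIter ω (fun θ x => F θ x + ε) k θ x with hx1
      set θ1 : T1 := θ + k • ((ω : ℝ):T1) with hθ1
      set x2 : ℝ := fiberIter ω (fun θ x => F θ x + ε) n₀ θ1 x1 with hx2
      have hhead : x + k * ρ + B ≤ x1 :=
        le_trans (hB k hkK θ x) (iter_le_eps hFm hε.le k θ x)
      have hmid : x1 + n₀ * ρ + (1 - 2*B) ≤ x2 := by
        have hsh : fiberIter ω F n₀ θ₀ x1 ≤ fiberIter ω (fun θ x => F θ x + ε) n₀ θ1 x1 :=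
          iter_shadow hFm hδ n₀ θ1 θ₀ x1 hkd.le
        have hsp := iter_spread (ω := ω) hFm hFp n₀ θ₀ x1 x₀
        linarith
      have htail : x2 + ((K - k : ℕ):ℝ) * ρ + B
          ≤ fiberIter ω (fun θ x => F θ x + ε) (K - k) (θ1 + n₀ • ((ω : ℝ):T1)) x2 :=
        le_trans (hB (K-k) (by omega) _ x2) (iter_le_eps hFm hε.le _ _ _)
      have hcast : ((k:ℝ)) * ρ + (n₀:ℝ) * ρ + ((K - k : ℕ):ℝ) * ρ = ((K + n₀ : ℕ):ℝ) * ρ := by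
        have h1 : ((K - k : ℕ):ℝ) = (K:ℝ) - (k:ℝ) := by
          have := Nat.cast_sub (R := ℝ) hkK
          exact_mod_cast this
        rw [h1]; push_cast; ring
      rw [heq]
      linarith
    intro θ x n
    induction n with
    | zero => simp [fiberIter]
    | succ n ih =>
      have hstep : (n+1) * (K + n₀) = n * (K + n₀) + (K + n₀) := by ring
      rw [hstep, iter_add]
      have h1 := key (θ + (n * (K + n₀)) • ((ω : ℝ):T1))
        (fiberIter ω (fun θ x => F θ x + ε) (n * (K + n₀)) θ x)
      push_cast at ih h1 ⊢
      linarith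
  refine ⟨K + n₀, by omega, parta, ?_⟩
  -- part (b)
  intro ρp hρp
  have hM1 : 1 ≤ K + n₀ := by omega
  have hMR : (1:ℝ) ≤ ((K + n₀ : ℕ) : ℝ) := by exact_mod_cast hM1
  have htend : Tendsto
      ((fun n : ℕ => (fiberIter ω (fun θ x => F θ x + ε) n 0 0 - 0) / (n : ℝ))
        ∘ (fun n : ℕ => n * (K + n₀))) atTop (𝓝 ρp) := by
    refine (hρp 0 0).comp ?_
    exact tendsto_atTop_mono (fun n => Nat.le_mul_of_pos_right n (by omega)) tendsto_id
  refine ge_of_tendsto htend ?_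
  filter_upwards [eventually_ge_atTop 1] with n hn
  simp only [Function.comp_apply]
  have ha := parta 0 0 n
  have hpos : (0:ℝ) < ((n * (K + n₀) : ℕ) : ℝ) := by
    have h1 : 1 ≤ n * (K + n₀) := Nat.one_le_iff_ne_zero.mpr
      (Nat.mul_ne_zero (by omega) (by omega))
    exact_mod_cast Nat.lt_of_lt_of_le Nat.zero_lt_one h1
  rw [le_div_iff₀ hpos]
  have heqc : (ρ + 1/((K + n₀ : ℕ) : ℝ)) * ((n * (K + n₀) : ℕ) : ℝ)
      = (n:ℝ) * (((K + n₀ : ℕ) : ℝ) * ρ + 1) := by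
    have hne : ((K + n₀ : ℕ) : ℝ) ≠ 0 := by linarith
    push_cast
    field_simp
  rw [heqc]
  linarith
end
end

section
/- Let f be a quasiperiodically forced circle homeomorphism over an irrational ω with lift F whose fibered rotation number is ρ. Fix ε > 0 and an integer q ≥ 1, and set A := {θ ∈ T¹ : (F_ε)^q_θ(x) ≥ F^q_θ(x) + 1 for all x ∈ ℝ} (a closed subset of T¹). Then for all θ ∈ T¹, x ∈ ℝ and n ∈ ℕ one has (F_ε)^{nq}_θ(x) ≥ F^{nq}_θ(x) + #{0 ≤ i < n : θ + iqω ∈ A}. Consequently, if F_ε has fibered rotation number ρ₊ and λ denotes the Haar probability measure on T¹, then ρ₊ ≥ ρ + λ(A)/q. -/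
open Filter Topology MeasureTheory
open scoped Classical
open scoped ENNReal

noncomputable section

lemma fiberIter_succ (ω : ℝ) (F : T1 → ℝ → ℝ) (n : ℕ) (θ : T1) (x : ℝ) :
    fiberIter ω F (n + 1) θ x = fiberIter ω F n (θ + (ω : T1)) (F θ x) := rfl

lemma fiberIter_add (ω : ℝ) (F : T1 → ℝ → ℝ) (m n : ℕ) (θ : T1) (x : ℝ) :
    fiberIter ω F (m + n) θ x
      = fiberIter ω F n (θ + m • (ω : T1)) (fiberIter ω F m θ x) := by
  induction m generalizing θ x with
  | zero => simp [fiberIter]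
  | succ m ih =>
      have h : m + 1 + n = (m + n) + 1 := by ring
      rw [h, fiberIter_succ, ih, fiberIter_succ]
      congr 1
      rw [succ_nsmul]
      abel

lemma fiberIter_mono (ω : ℝ) (F : T1 → ℝ → ℝ) (hm : ∀ θ, Monotone (F θ)) (n : ℕ) (θ : T1) :
    Monotone (fiberIter ω F n θ) := by
  induction n generalizing θ with
  | zero => exact monotone_id
  | succ n ih =>
      intro a b hab
      rw [fiberIter_succ, fiberIter_succ]
      exact ih _ (hm θ hab)

lemma fiberIter_add_one (ω : ℝ) (F : T1 → ℝ → ℝ) (hper : ∀ θ x, F θ (x + 1) = F θ x + 1)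
    (n : ℕ) (θ : T1) (x : ℝ) :
    fiberIter ω F n θ (x + 1) = fiberIter ω F n θ x + 1 := by
  induction n generalizing θ x with
  | zero => rfl
  | succ n ih => rw [fiberIter_succ, fiberIter_succ, hper, ih]

lemma fiberIter_add_nat (ω : ℝ) (F : T1 → ℝ → ℝ) (hper : ∀ θ x, F θ (x + 1) = F θ x + 1)
    (n : ℕ) (θ : T1) (x : ℝ) (m : ℕ) :
    fiberIter ω F n θ (x + m) = fiberIter ω F n θ x + m := by
  induction m with
  | zero => simp
  | succ m ih =>
      have : x + (m + 1 : ℕ) = (x + m) + 1 := by push_cast; ring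
      rw [this, fiberIter_add_one ω F hper, ih]
      push_cast; ring

lemma fiberIter_le_fiberIter (ω : ℝ) (F G : T1 → ℝ → ℝ)
    (hg : ∀ θ, Monotone (G θ)) (hFG : ∀ θ x, F θ x ≤ G θ x)
    (n : ℕ) (θ : T1) (x : ℝ) :
    fiberIter ω F n θ x ≤ fiberIter ω G n θ x := by
  induction n generalizing θ x with
  | zero => rfl
  | succ n ih =>
      rw [fiberIter_succ, fiberIter_succ]
      exact le_trans (ih _ _) (fiberIter_mono ω G hg n _ (hFG θ x))

lemma fiberIter_cont (ω : ℝ) (F : T1 → ℝ → ℝ)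
    (hc : Continuous fun p : T1 × ℝ => F p.1 p.2) (n : ℕ) :
    Continuous fun p : T1 × ℝ => fiberIter ω F n p.1 p.2 := by
  induction n with
  | zero => exact continuous_snd
  | succ n ih =>
      have h : (fun p : T1 × ℝ => fiberIter ω F (n + 1) p.1 p.2)
          = (fun p : T1 × ℝ => fiberIter ω F n p.1 p.2)
            ∘ fun p : T1 × ℝ => (p.1 + (ω : T1), F p.1 p.2) := rfl
      rw [h]
      exact ih.comp ((continuous_fst.add continuous_const).prodMk hc)

lemma fiberIter_pert_le (ω : ℝ) (F : T1 → ℝ → ℝ)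
    (hm : ∀ θ, Monotone (F θ)) (hper : ∀ θ x, F θ (x + 1) = F θ x + 1)
    (ε : ℝ) (c : ℕ) (hc : ε ≤ c) (n : ℕ) (θ : T1) (x : ℝ) :
    fiberIter ω (fun θ x => F θ x + ε) n θ x ≤ fiberIter ω F n θ x + n * c := by
  induction n generalizing θ x with
  | zero => simp [fiberIter]
  | succ n ih =>
      rw [fiberIter_succ, fiberIter_succ]
      calc fiberIter ω (fun θ x => F θ x + ε) n (θ + (ω : T1)) (F θ x + ε)
          ≤ fiberIter ω F n (θ + (ω : T1)) (F θ x + ε) + n * c := ih _ _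
        _ ≤ fiberIter ω F n (θ + (ω : T1)) (F θ x + c) + n * c := by
            gcongr
            exact fiberIter_mono ω F hm n _ (by linarith)
        _ = fiberIter ω F n (θ + (ω : T1)) (F θ x) + c + n * c := by
            rw [fiberIter_add_nat ω F hper]
        _ = fiberIter ω F n (θ + (ω : T1)) (F θ x) + (n + 1 : ℕ) * c := by push_cast; ring

/-- key estimate in Lemma 3.2: the perturbed iterates gain at least one
unit over the unperturbed ones each time the base point visits the set `A`, and hence
the perturbed rotation number gains at least `λ(A)/q`. -/
theorem perturbed_iterates_gain
    (ω : ℝ) (hω : Irrational ω)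
    (F : T1 → ℝ → ℝ) (hF : IsQpfLift ω F)
    (ρ : ℝ) (hρ : HasRotNum ω F ρ)
    (ε : ℝ) (hε : 0 < ε) (q : ℕ) (hq : 1 ≤ q)
    (A : Set T1)
    (hA : A = {θ : T1 | ∀ x : ℝ,
      fiberIter ω F q θ x + 1 ≤ fiberIter ω (fun θ x => F θ x + ε) q θ x}) :
    (∀ (θ : T1) (x : ℝ) (n : ℕ),
      fiberIter ω F (n * q) θ x +
        (∑ i ∈ Finset.range n, if θ + (i * q) • (ω : T1) ∈ A then (1 : ℝ) else 0) ≤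
      fiberIter ω (fun θ x => F θ x + ε) (n * q) θ x) ∧
    (∀ ρp : ℝ, HasRotNum ω (fun θ x => F θ x + ε) ρp →
      ρ + (volume A).toReal / (q : ℝ) ≤ ρp) := by
  have hFcont := hF.cont
  have hFmono : ∀ θ, Monotone (F θ) := fun θ => (hF.mono θ).monotone
  have hFper := hF.per
  have key : ∀ (θ : T1) (x : ℝ) (n : ℕ),
      fiberIter ω F (n * q) θ x +
        (∑ i ∈ Finset.range n, if θ + (i * q) • (ω : T1) ∈ A then (1 : ℝ) else 0) ≤
      fiberIter ω (fun θ x => F θ x + ε) (n * q) θ x := by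
    set G : T1 → ℝ → ℝ := fun θ x => F θ x + ε with hGdef
    have hGmono : ∀ θ, Monotone (G θ) := fun θ a b h => by
      simpa [hGdef] using hFmono θ h
    have hGper : ∀ θ x, G θ (x + 1) = G θ x + 1 := by
      intro θ x; simp only [hGdef, hFper]; ring
    have hFG : ∀ θ x, F θ x ≤ G θ x := fun θ x => by simp [hGdef, hε.le]
    intro θ x n
    induction n with
    | zero => simp [fiberIter]
    | succ n ih =>
        have hnq : (n + 1) * q = n * q + q := by ring
        rw [hnq, Finset.sum_range_succ,
          fiberIter_add ω F (n * q) q θ x, fiberIter_add ω G (n * q) q θ x]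
        set ψ := θ + (n * q) • (ω : T1) with hψ
        set y := fiberIter ω F (n * q) θ x with hy
        set m : ℕ := ((Finset.range n).filter
          (fun i => θ + (i * q) • (ω : T1) ∈ A)).card with hm
        have hSm : (∑ i ∈ Finset.range n, if θ + (i * q) • (ω : T1) ∈ A then (1 : ℝ) else 0)
            = (m : ℝ) := by rw [hm, Finset.sum_boole]
        rw [hSm] at ih ⊢
        have step1 : fiberIter ω G q ψ (y + m) ≤ fiberIter ω G q ψ (fiberIter ω G (n * q) θ x) :=
          fiberIter_mono ω G hGmono q ψ ih
        have step2 : fiberIter ω G q ψ (y + m) = fiberIter ω G q ψ y + m :=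
          fiberIter_add_nat ω G hGper q ψ y m
        by_cases hin : ψ ∈ A
        · have h1 : fiberIter ω F q ψ y + 1 ≤ fiberIter ω G q ψ y := by
            rw [hA] at hin; exact hin y
          simp only [hin, if_true]
          linarith
        · have h1 : fiberIter ω F q ψ y ≤ fiberIter ω G q ψ y :=
            fiberIter_le_fiberIter ω F G hGmono hFG q ψ y
          simp only [hin, if_false]
          linarith
  refine ⟨key, ?_⟩
  intro ρp hρp
  set G : T1 → ℝ → ℝ := fun θ x => F θ x + ε with hGdef
  have hGmono : ∀ θ, Monotone (G θ) := fun θ a b h => by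
    simpa [hGdef] using hFmono θ h
  have hGcont : Continuous fun p : T1 × ℝ => G p.1 p.2 := by
    exact hFcont.add continuous_const
  have hFG : ∀ θ x, F θ x ≤ G θ x := fun θ x => by simp [hGdef, hε.le]
  have hprob : IsProbabilityMeasure (volume : Measure T1) :=
    ⟨by rw [AddCircle.measure_univ]; simp⟩
  -- measurability of A
  have hAmeas : MeasurableSet A := by
    rw [hA]
    have hset : {θ : T1 | ∀ x : ℝ, fiberIter ω F q θ x + 1 ≤ fiberIter ω G q θ x}
        = ⋂ x : ℝ, {θ : T1 | fiberIter ω F q θ x + 1 ≤ fiberIter ω G q θ x} := by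
      ext θ; simp
    rw [hset]
    refine (isClosed_iInter fun x => ?_).measurableSet
    have c1 : Continuous fun θ : T1 => fiberIter ω F q θ x + 1 :=
      ((fiberIter_cont ω F hFcont q).comp (continuous_id.prodMk continuous_const)).add
        continuous_const
    have c2 : Continuous fun θ : T1 => fiberIter ω G q θ x :=
      (fiberIter_cont ω G hGcont q).comp (continuous_id.prodMk continuous_const)
    exact isClosed_le c1 c2
  have hq0 : (0 : ℝ) < q := by exact_mod_cast hq
  set c : ℕ := ⌈ε⌉₊ with hcdef
  have hc : ε ≤ c := Nat.le_ceil ε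
  set D : ℕ → T1 → ℝ :=
    fun n θ => (fiberIter ω G (n * q) θ 0 - fiberIter ω F (n * q) θ 0) / n with hDdef
  have hmul : Tendsto (fun n : ℕ => n * q) atTop atTop :=
    tendsto_atTop_atTop.mpr fun b => ⟨b, fun n hn => le_trans hn (Nat.le_mul_of_pos_right n hq)⟩
  -- pointwise limit of D
  have hlimD : ∀ θ : T1, Tendsto (fun n => D n θ) atTop (𝓝 ((ρp - ρ) * q)) := by
    intro θ
    have h1 : Tendsto (fun n : ℕ => (fiberIter ω G (n * q) θ 0 - 0) / ((n * q : ℕ) : ℝ))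
        atTop (𝓝 ρp) := (hρp θ 0).comp hmul
    have h2 : Tendsto (fun n : ℕ => (fiberIter ω F (n * q) θ 0 - 0) / ((n * q : ℕ) : ℝ))
        atTop (𝓝 ρ) := (hρ θ 0).comp hmul
    have h3 := (h1.sub h2).mul_const (q : ℝ)
    refine h3.congr' ?_
    filter_upwards [eventually_ge_atTop 1] with n hn
    have hn0 : (n : ℝ) ≠ 0 := by positivity
    have hq0' : (q : ℝ) ≠ 0 := ne_of_gt hq0
    rw [hDdef]
    push_cast
    field_simp
    ring
  -- bounds on D
  have hDnonneg : ∀ n θ, 0 ≤ D n θ := by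
    intro n θ
    apply div_nonneg _ (Nat.cast_nonneg n)
    have := fiberIter_le_fiberIter ω F G hGmono hFG (n * q) θ 0
    linarith
  have hDle : ∀ n θ, D n θ ≤ (q : ℝ) * c := by
    intro n θ
    rcases Nat.eq_zero_or_pos n with hn | hn
    · subst hn; simp [hDdef]; positivity
    · have hn0 : (0 : ℝ) < n := by exact_mod_cast hn
      rw [hDdef, div_le_iff₀ hn0]
      have := fiberIter_pert_le ω F hFmono hFper ε c hc (n * q) θ 0
      have hcast : ((n * q : ℕ) : ℝ) * c = (q : ℝ) * c * n := by push_cast; ring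
      rw [hGdef]
      push_cast at this ⊢
      nlinarith
  have hDbound : ∀ n, ∀ᵐ θ : T1, ‖D n θ‖ ≤ (q : ℝ) * c := by
    intro n
    filter_upwards with θ
    rw [Real.norm_eq_abs, abs_of_nonneg (hDnonneg n θ)]
    exact hDle n θ
  have hDmeas : ∀ n, AEStronglyMeasurable (D n) volume := by
    intro n
    apply Continuous.aestronglyMeasurable
    exact (((fiberIter_cont ω G hGcont (n * q)).comp
        (continuous_id.prodMk continuous_const)).sub
      ((fiberIter_cont ω F hFcont (n * q)).comp
        (continuous_id.prodMk continuous_const))).div_const _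
  have hDint : ∀ n, Integrable (D n) volume := by
    intro n
    exact (integrable_const ((q : ℝ) * c)).mono' (hDmeas n) (hDbound n)
  -- dominated convergence
  have hDCT : Tendsto (fun n => ∫ θ, D n θ) atTop (𝓝 (∫ _θ : T1, (ρp - ρ) * q)) := by
    exact tendsto_integral_of_dominated_convergence (fun _ => (q : ℝ) * c) hDmeas
      (integrable_const _) hDbound (by filter_upwards with θ using hlimD θ)
  have hconst : (∫ _θ : T1, (ρp - ρ) * q) = (ρp - ρ) * q := by
    rw [integral_const]; simp
  rw [hconst] at hDCT
  -- per-n lower bound on the integral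
  have hlow : ∀ n : ℕ, 1 ≤ n → (volume A).toReal ≤ ∫ θ, D n θ := by
    intro n hn
    have hn0 : (0 : ℝ) < n := by exact_mod_cast hn
    set N : T1 → ℝ :=
      fun θ => (∑ i ∈ Finset.range n, if θ + (i * q) • (ω : T1) ∈ A then (1 : ℝ) else 0) / n
      with hNdef
    have hNint_i : ∀ i : ℕ, Integrable
        (fun θ : T1 => if θ + (i * q) • (ω : T1) ∈ A then (1 : ℝ) else 0) volume := by
      intro i
      have hmeas : MeasurableSet {θ : T1 | θ + (i * q) • (ω : T1) ∈ A} :=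
        hAmeas.preimage (measurable_add_const _)
      have := (integrable_const (1 : ℝ) (μ := (volume : Measure T1))).indicator hmeas
      refine this.congr ?_
      filter_upwards with θ
      rw [Set.indicator_apply]
      rfl
    have hNint : Integrable N volume := by
      exact ((integrable_finset_sum _ fun i _ => hNint_i i).div_const _)
    have hpt : ∀ θ, N θ ≤ D n θ := by
      intro θ
      rw [hNdef, hDdef]
      rw [div_le_div_iff_of_pos_right hn0]
      have hkey := key θ 0 n
      rw [hGdef]
      linarith
    have hint_i : ∀ i : ℕ,
        (∫ θ : T1, if θ + (i * q) • (ω : T1) ∈ A then (1 : ℝ) else 0) = (volume A).toReal := by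
      intro i
      have heq : (fun θ : T1 => if θ + (i * q) • (ω : T1) ∈ A then (1 : ℝ) else 0)
          = fun θ : T1 => A.indicator (fun _ => (1 : ℝ)) (θ + (i * q) • (ω : T1)) := by
        funext θ
        rw [Set.indicator_apply]
      rw [heq, integral_add_right_eq_self (μ := (volume : Measure T1))
        (A.indicator fun _ => (1 : ℝ)), integral_indicator_const _ hAmeas]
      simp
      rfl
    have hNint_eq : (∫ θ, N θ) = (volume A).toReal := by
      rw [hNdef]
      simp only [integral_div]
      rw [integral_finset_sum _ fun i _ => hNint_i i]
      simp only [hint_i, Finset.sum_const, Finset.card_range, nsmul_eq_mul]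
      field_simp
    calc (volume A).toReal = ∫ θ, N θ := hNint_eq.symm
      _ ≤ ∫ θ, D n θ := integral_mono hNint (hDint n) hpt
  -- conclude
  have hfin : (volume A).toReal ≤ (ρp - ρ) * q :=
    ge_of_tendsto hDCT (by filter_upwards [eventually_ge_atTop 1] with n hn using hlow n hn)
  have : (volume A).toReal / q ≤ ρp - ρ := (div_le_iff₀ hq0).mpr hfin
  linarith
end
end

section
/- Let f be a quasiperiodically forced circle homeomorphism over an irrational ω with lift F, and let A be a minimal F-invariant strip. Suppose there exists δ > 0 such that every minimal F-invariant strip B with A ≺ B satisfies φ⁻_B(θ) − φ⁺_A(θ) ≥ δ for all θ ∈ T¹. Then there exists a unique minimal F-invariant strip B with A ≺ B such that there is no F-invariant strip S with A ≺ S ≺ B. -/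
open Filter Topology MeasureTheory
open scoped ENNReal

noncomputable section

/-- Upper bounding graph `φ⁺_A(θ) = sup A_θ`. -/
def phiSup (A : Set (T1 × ℝ)) (θ : T1) : ℝ := sSup {x : ℝ | (θ, x) ∈ A}

/-- Lower bounding graph `φ⁻_A(θ) = inf A_θ`. -/
def phiInf (A : Set (T1 × ℝ)) (θ : T1) : ℝ := sInf {x : ℝ | (θ, x) ∈ A}

/-- `A ≺ B`: the strip `A` lies strictly below the strip `B`. -/
def StripLt (A B : Set (T1 × ℝ)) : Prop := ∀ θ, phiSup A θ < phiInf B θ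

/-- A minimal invariant strip: one not strictly containing another invariant strip. -/
def IsMinimalStrip (ω : ℝ) (F : T1 → ℝ → ℝ) (A : Set (T1 × ℝ)) : Prop :=
  IsInvStrip ω F A ∧ ∀ S : Set (T1 × ℝ), IsInvStrip ω F S → S ⊆ A → S = A

namespace QPF

open Set


variable {ω : ℝ} {F : T1 → ℝ → ℝ} {X Y Z : Set (T1 × ℝ)}

lemma skew_cont (hF : IsQpfLift ω F) : Continuous (skew ω F) :=
  (continuous_fst.add continuous_const).prodMk hF.cont

lemma skew_inj (hF : IsQpfLift ω F) : Function.Injective (skew ω F) := by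
  rintro ⟨θ, x⟩ ⟨θ', x'⟩ h
  simp only [skew, Prod.mk.injEq] at h
  obtain ⟨h1, h2⟩ := h
  have hθ : θ = θ' := by
    have := congrArg (fun z => z - (ω : T1)) h1
    simpa using this
  subst hθ
  exact Prod.ext rfl ((hF.mono θ).injective h2)

lemma skew_surj (hF : IsQpfLift ω F) : Function.Surjective (skew ω F) := by
  rintro ⟨θ', x'⟩
  obtain ⟨x, hx⟩ := hF.surj (θ' - (ω : T1)) x'
  exact ⟨(θ' - (ω : T1), x), by simp [skew, hx]⟩

/-- All the fiber facts for an invariant strip. -/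
lemma phi_mem (h : IsInvStrip ω F X) (θ : T1) :
    (θ, phiInf X θ) ∈ X ∧ (θ, phiSup X θ) ∈ X ∧
      ∀ x : ℝ, (θ, x) ∈ X → phiInf X θ ≤ x ∧ x ≤ phiSup X θ := by
  obtain ⟨a, b, hab, hfib⟩ := h.2.2 θ
  have hinf : phiInf X θ = a := by rw [phiInf, hfib, csInf_Icc hab]
  have hsup : phiSup X θ = b := by rw [phiSup, hfib, csSup_Icc hab]
  have hmem : ∀ x : ℝ, (θ, x) ∈ X ↔ x ∈ Set.Icc a b := fun x => by
    rw [← hfib]; rfl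
  refine ⟨?_, ?_, ?_⟩
  · rw [hinf, hmem]; exact ⟨le_rfl, hab⟩
  · rw [hsup, hmem]; exact ⟨hab, le_rfl⟩
  · intro x hx; rw [hmem] at hx; rw [hinf, hsup]; exact hx

lemma fib_nonempty (h : IsInvStrip ω F X) (θ : T1) : ∃ x, (θ, x) ∈ X :=
  ⟨phiInf X θ, (phi_mem h θ).1⟩

lemma stripLt_iff (hX : IsInvStrip ω F X) (hY : IsInvStrip ω F Y) :
    StripLt X Y ↔ ∀ θ x y, (θ, x) ∈ X → (θ, y) ∈ Y → x < y := by
  constructor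
  · intro h θ x y hx hy
    calc x ≤ phiSup X θ := ((phi_mem hX θ).2.2 x hx).2
      _ < phiInf Y θ := h θ
      _ ≤ y := ((phi_mem hY θ).2.2 y hy).1
  · intro h θ
    exact h θ _ _ (phi_mem hX θ).2.1 (phi_mem hY θ).1

lemma stripLt_irrefl (hX : IsInvStrip ω F X) : ¬ StripLt X X := fun h =>
  lt_irrefl _ (((stripLt_iff hX hX).1 h) 0 _ _ (phi_mem hX 0).1 (phi_mem hX 0).1)

lemma stripLt_asymm (hX : IsInvStrip ω F X) (hY : IsInvStrip ω F Y)
    (h1 : StripLt X Y) (h2 : StripLt Y X) : False := by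
  rw [stripLt_iff hX hY] at h1
  rw [stripLt_iff hY hX] at h2
  have hx := (phi_mem hX 0).1
  have hy := (phi_mem hY 0).1
  exact lt_asymm (h1 0 _ _ hx hy) (h2 0 _ _ hy hx)

lemma stripLt_trans (hX : IsInvStrip ω F X) (hY : IsInvStrip ω F Y) (hZ : IsInvStrip ω F Z)
    (h1 : StripLt X Y) (h2 : StripLt Y Z) : StripLt X Z := by
  rw [stripLt_iff hX hY] at h1; rw [stripLt_iff hY hZ] at h2
  rw [stripLt_iff hX hZ]
  intro θ x z hx hz
  obtain ⟨y, hy⟩ := fib_nonempty hY θ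
  exact (h1 θ x y hx hy).trans (h2 θ y z hy hz)

/-- Boundedness of a compact set in the vertical direction. -/
lemma exists_bound (hX : IsCompact X) : ∃ M : ℝ, 0 ≤ M ∧ ∀ p ∈ X, |p.2| ≤ M := by
  have h := (hX.image continuous_snd).isBounded
  obtain ⟨C, hC⟩ := isBounded_iff_forall_norm_le.1 h
  refine ⟨max C 0, le_max_right _ _, fun p hp => ?_⟩
  have h2 := hC p.2 ⟨p, hp, rfl⟩
  rw [Real.norm_eq_abs] at h2
  exact le_trans h2 (le_max_left _ _)

/-- Minimality of the irrational rotation: a nonempty closed set invariant in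
both directions is everything. -/
lemma rot_minimal (hω : Irrational ω) {S : Set T1} (hcl : IsClosed S) (hne : S.Nonempty)
    (hfwd : ∀ θ ∈ S, θ + (ω : T1) ∈ S) (hbwd : ∀ θ ∈ S, θ - (ω : T1) ∈ S) :
    S = Set.univ := by
  obtain ⟨θ₀, hθ₀⟩ := hne
  set G : AddSubgroup ℝ := AddSubgroup.closure {1, ω} with hG
  have hdense : Dense (G : Set ℝ) := by
    rcases AddSubgroup.dense_or_cyclic G with h | ⟨a, ha⟩
    · exact h
    · exfalso
      have h1 : (1 : ℝ) ∈ G := AddSubgroup.subset_closure (by simp)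
      have hw : ω ∈ G := AddSubgroup.subset_closure (by simp)
      rw [ha, AddSubgroup.mem_closure_singleton] at h1 hw
      obtain ⟨n, hn⟩ := h1
      obtain ⟨m, hm⟩ := hw
      have hn0 : (n : ℝ) * a = 1 := by rw [← hn]; simp [zsmul_eq_mul]
      have hm0 : (m : ℝ) * a = ω := by rw [← hm]; simp [zsmul_eq_mul]
      have hne : (n : ℝ) ≠ 0 := by
        intro h; rw [h, zero_mul] at hn0; exact one_ne_zero hn0.symm
      have : ω = (m : ℝ) / (n : ℝ) := by
        rw [eq_div_iff hne, ← hm0, mul_assoc, mul_comm a, hn0, mul_one]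
      exact (irrational_iff_ne_rational ω).1 hω m n (by exact_mod_cast hne) this
  -- each element of G moves S into itself (in both directions)
  have hmove : ∀ g ∈ G, (∀ θ ∈ S, θ + (g : T1) ∈ S) ∧ (∀ θ ∈ S, θ - (g : T1) ∈ S) := by
    intro g hg
    induction hg using AddSubgroup.closure_induction with
    | mem x hx =>
      rcases hx with h | h
      · subst h
        constructor <;> intro θ hθ <;>
          · have : ((1 : ℝ) : T1) = 0 := AddCircle.coe_period 1
            simpa [this] using hθ
      · subst h; exact ⟨hfwd, hbwd⟩
    | zero => simpa using ⟨fun θ h => h, fun θ h => h⟩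
    | add x y hx hy ihx ihy =>
      refine ⟨fun θ hθ => ?_, fun θ hθ => ?_⟩
      · have := ihy.1 _ (ihx.1 θ hθ)
        rw [AddCircle.coe_add, ← add_assoc]; exact this
      · have := ihy.2 _ (ihx.2 θ hθ)
        rw [AddCircle.coe_add, sub_add_eq_sub_sub]; exact this
    | neg x hx ihx =>
      refine ⟨fun θ hθ => ?_, fun θ hθ => ?_⟩
      · have := ihx.2 θ hθ; rw [AddCircle.coe_neg, ← sub_eq_add_neg]; exact this
      · have := ihx.1 θ hθ; rw [AddCircle.coe_neg, sub_neg_eq_add]; exact this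
  -- the orbit of θ₀ is contained in S and is dense
  have horb : (fun r : ℝ => θ₀ + (r : T1)) '' (G : Set ℝ) ⊆ S := by
    rintro _ ⟨g, hg, rfl⟩; exact (hmove g hg).1 θ₀ hθ₀
  have hdense2 : Dense ((fun r : ℝ => θ₀ + (r : T1)) '' (G : Set ℝ)) := by
    intro x
    rw [mem_closure_iff]
    intro U hU hxU
    have hcont : Continuous fun r : ℝ => θ₀ + (r : T1) :=
      continuous_const.add (AddCircle.continuous_mk' 1)
    have hsurj : Function.Surjective fun r : ℝ => θ₀ + (r : T1) := by
      intro y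
      obtain ⟨r, hr⟩ : ∃ r : ℝ, (r : T1) = y - θ₀ := QuotientAddGroup.mk_surjective _
      refine ⟨r, ?_⟩
      show θ₀ + (r : T1) = y
      rw [hr]; abel
    obtain ⟨r, hr⟩ := hsurj x
    have : r ∈ closure (G : Set ℝ) := hdense r
    rw [mem_closure_iff] at this
    obtain ⟨g, hg1, hg2⟩ := this _ (hU.preimage hcont) (by simpa [hr] using hxU)
    exact ⟨_, hg1, g, hg2, rfl⟩
  have := hdense2.mono horb
  rw [← hcl.closure_eq]
  exact eq_univ_of_univ_subset (by rw [← this.closure_eq])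

lemma fiber_interval {s : Set ℝ} (hc : IsCompact s) (hn : s.Nonempty) (ho : s.OrdConnected) :
    ∃ a b : ℝ, a ≤ b ∧ s = Set.Icc a b := by
  refine ⟨sInf s, sSup s, le_csSup_of_le hc.bddAbove (hc.sInf_mem hn) le_rfl |>.trans le_rfl |>.trans_eq rfl, ?_⟩
  apply subset_antisymm
  · intro x hx
    exact ⟨csInf_le hc.bddBelow hx, le_csSup hc.bddAbove hx⟩
  · exact ho.out (hc.sInf_mem hn) (hc.sSup_mem hn)

/-- Intersection of two invariant strips with everywhere-intersecting fibers. -/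
lemma inv_inter (hF : IsQpfLift ω F) (hX : IsInvStrip ω F X) (hY : IsInvStrip ω F Y)
    (h : ∀ θ, ∃ x, (θ, x) ∈ X ∧ (θ, x) ∈ Y) : IsInvStrip ω F (X ∩ Y) := by
  refine ⟨hX.1.of_isClosed_subset (hX.1.isClosed.inter hY.1.isClosed) inter_subset_left, ?_, ?_⟩
  · rw [Set.image_inter (skew_inj hF), hX.2.1, hY.2.1]
  · intro θ
    obtain ⟨a, b, hab, hfX⟩ := hX.2.2 θ
    obtain ⟨c, d, hcd, hfY⟩ := hY.2.2 θ
    have hfib : {x : ℝ | (θ, x) ∈ X ∩ Y} = Set.Icc (a ⊔ c) (b ⊓ d) := by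
      rw [← Set.Icc_inter_Icc, ← hfX, ← hfY]; rfl
    obtain ⟨x, hx1, hx2⟩ := h θ
    have hx : x ∈ Set.Icc (a ⊔ c) (b ⊓ d) := by rw [← hfib]; exact ⟨hx1, hx2⟩
    exact ⟨a ⊔ c, b ⊓ d, le_trans hx.1 hx.2, hfib⟩

/-- A minimal strip either is contained in another invariant strip or is disjoint from it. -/
lemma meet_or_disjoint (hω : Irrational ω) (hF : IsQpfLift ω F)
    (hA : IsMinimalStrip ω F X) (hC : IsInvStrip ω F Y) :
    X ⊆ Y ∨ X ∩ Y = ∅ := by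
  by_cases h : ∀ θ, ∃ x, (θ, x) ∈ X ∧ (θ, x) ∈ Y
  · left
    have hW := inv_inter hF hA.1 hC h
    have := hA.2 _ hW inter_subset_left
    rw [← this]; exact inter_subset_right
  · right
    push_neg at h
    obtain ⟨θ₀, hθ₀⟩ := h
    by_contra hne
    rw [← Ne, ← nonempty_iff_ne_empty] at hne
    set W := X ∩ Y with hWdef
    have hWc : IsCompact W := hA.1.1.of_isClosed_subset (hA.1.1.isClosed.inter hC.1.isClosed)
      inter_subset_left
    have hWinv : skew ω F '' W = W := by rw [Set.image_inter (skew_inj hF), hA.1.2.1, hC.2.1]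
    set S := Prod.fst '' W with hSdef
    have hScl : IsClosed S := (hWc.image continuous_fst).isClosed
    have hSne : S.Nonempty := hne.image _
    have hfwd : ∀ θ ∈ S, θ + (ω : T1) ∈ S := by
      rintro θ ⟨p, hp, rfl⟩
      have : skew ω F p ∈ W := by rw [← hWinv]; exact ⟨p, hp, rfl⟩
      exact ⟨skew ω F p, this, rfl⟩
    have hbwd : ∀ θ ∈ S, θ - (ω : T1) ∈ S := by
      rintro θ ⟨p, hp, rfl⟩
      have : p ∈ skew ω F '' W := by rw [hWinv]; exact hp
      obtain ⟨q, hq, hqp⟩ := this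
      refine ⟨q, hq, ?_⟩
      have : q.1 + (ω : T1) = p.1 := congrArg Prod.fst hqp
      rw [← this]; abel
    have := rot_minimal hω hScl hSne hfwd hbwd
    have : θ₀ ∈ S := this ▸ Set.mem_univ θ₀
    obtain ⟨⟨pθ, px⟩, hp, hp1⟩ := this
    rw [show pθ = θ₀ from hp1] at hp
    exact hθ₀ px hp.1 hp.2

/-- Two disjoint invariant strips are strictly ordered. -/
lemma ordered_of_disjoint (hX : IsInvStrip ω F X) (hY : IsInvStrip ω F Y)
    (h : X ∩ Y = ∅) : StripLt X Y ∨ StripLt Y X := by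
  classical
  set U := {θ : T1 | phiSup X θ < phiInf Y θ} with hU
  set V := {θ : T1 | phiSup Y θ < phiInf X θ} with hV
  have hdisj : ∀ θ, ∀ x y : ℝ, (θ, x) ∈ X → (θ, y) ∈ Y → x ≠ y := by
    intro θ x y hx hy hxy
    subst hxy
    exact absurd (Set.mem_inter hx hy) (by rw [h]; exact id)
  -- cover
  have hcover : ∀ θ, θ ∈ U ∪ V := by
    intro θ
    obtain ⟨a, b, hab, hfX⟩ := hX.2.2 θ
    obtain ⟨c, d, hcd, hfY⟩ := hY.2.2 θ
    have hXa : (θ, a) ∈ X := by have : a ∈ Set.Icc a b := ⟨le_rfl, hab⟩; rw [← hfX] at this; exact this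
    have hXb : (θ, b) ∈ X := by have : b ∈ Set.Icc a b := ⟨hab, le_rfl⟩; rw [← hfX] at this; exact this
    have hYc : (θ, c) ∈ Y := by have : c ∈ Set.Icc c d := ⟨le_rfl, hcd⟩; rw [← hfY] at this; exact this
    have hYd : (θ, d) ∈ Y := by have : d ∈ Set.Icc c d := ⟨hcd, le_rfl⟩; rw [← hfY] at this; exact this
    have hsX : phiSup X θ = b := by rw [phiSup, hfX, csSup_Icc hab]
    have hiX : phiInf X θ = a := by rw [phiInf, hfX, csInf_Icc hab]
    have hsY : phiSup Y θ = d := by rw [phiSup, hfY, csSup_Icc hcd]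
    have hiY : phiInf Y θ = c := by rw [phiInf, hfY, csInf_Icc hcd]
    have hdis : Set.Icc a b ∩ Set.Icc c d = ∅ := by
      rw [Set.eq_empty_iff_forall_notMem]
      intro x ⟨h1, h2⟩
      have hx1 : (θ, x) ∈ X := by rw [show ((θ,x) ∈ X) = (x ∈ {x : ℝ | (θ,x) ∈ X}) from rfl, hfX]; exact h1
      have hx2 : (θ, x) ∈ Y := by rw [show ((θ,x) ∈ Y) = (x ∈ {x : ℝ | (θ,x) ∈ Y}) from rfl, hfY]; exact h2
      exact hdisj θ x x hx1 hx2 rfl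
    rcases lt_or_ge b c with hbc | hcb
    · left; rw [hU, Set.mem_setOf_eq, hsX, hiY]; exact hbc
    · right; rw [hV, Set.mem_setOf_eq, hsY, hiX]
      rcases lt_or_ge d a with hda | had
      · exact hda
      · exfalso
        -- intervals [a,b] and [c,d] with c ≤ b and a ≤ d intersect
        have : max a c ∈ Set.Icc a b ∩ Set.Icc c d :=
          ⟨⟨le_max_left _ _, max_le hab hcb⟩, ⟨le_max_right _ _, max_le had hcd⟩⟩
        rw [hdis] at this; exact this
  -- openness
  have hopen : ∀ X' Y' : Set (T1 × ℝ), IsInvStrip ω F X' → IsInvStrip ω F Y' →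
      IsOpen {θ : T1 | phiSup X' θ < phiInf Y' θ} := by
    intro X' Y' hX' hY'
    rw [isOpen_iff_mem_nhds]
    intro θ₀ hθ₀
    rw [Set.mem_setOf_eq] at hθ₀
    set c := (phiSup X' θ₀ + phiInf Y' θ₀) / 2 with hc
    have h1 : phiSup X' θ₀ < c := by rw [hc]; linarith
    have h2 : c < phiInf Y' θ₀ := by rw [hc]; linarith
    set V₁ := (Prod.fst '' (X' ∩ {p : T1 × ℝ | c ≤ p.2}))ᶜ with hV₁
    set V₂ := (Prod.fst '' (Y' ∩ {p : T1 × ℝ | p.2 ≤ c}))ᶜ with hV₂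
    have hV₁o : IsOpen V₁ := isOpen_compl_iff.mpr
      ((hX'.1.inter_right (isClosed_le continuous_const continuous_snd)).image
        continuous_fst).isClosed
    have hV₂o : IsOpen V₂ := isOpen_compl_iff.mpr
      ((hY'.1.inter_right (isClosed_le continuous_snd continuous_const)).image
        continuous_fst).isClosed
    have hmem₁ : θ₀ ∈ V₁ := by
      rintro ⟨⟨pθ, px⟩, ⟨hpX, hpc⟩, hp1⟩
      rw [show pθ = θ₀ from hp1] at hpX
      have := ((phi_mem hX' θ₀).2.2 px hpX).2
      simp only [Set.mem_setOf_eq] at hpc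
      exact absurd (lt_of_lt_of_le h1 (le_trans hpc this)) (lt_irrefl _)
    have hmem₂ : θ₀ ∈ V₂ := by
      rintro ⟨⟨pθ, px⟩, ⟨hpY, hpc⟩, hp1⟩
      rw [show pθ = θ₀ from hp1] at hpY
      have := ((phi_mem hY' θ₀).2.2 px hpY).1
      simp only [Set.mem_setOf_eq] at hpc
      exact absurd (lt_of_le_of_lt (le_trans this hpc) h2) (lt_irrefl _)
    have hsub : V₁ ∩ V₂ ⊆ {θ : T1 | phiSup X' θ < phiInf Y' θ} := by
      rintro θ ⟨hθ₁, hθ₂⟩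
      have hs : phiSup X' θ < c := by
        by_contra hcon
        push_neg at hcon
        exact hθ₁ ⟨(θ, phiSup X' θ), ⟨(phi_mem hX' θ).2.1, hcon⟩, rfl⟩
      have hi : c < phiInf Y' θ := by
        by_contra hcon
        push_neg at hcon
        exact hθ₂ ⟨(θ, phiInf Y' θ), ⟨(phi_mem hY' θ).1, hcon⟩, rfl⟩
      exact Set.mem_setOf_eq ▸ lt_trans hs hi
    exact Filter.mem_of_superset ((hV₁o.inter hV₂o).mem_nhds ⟨hmem₁, hmem₂⟩) hsub
  have hUo : IsOpen U := hopen X Y hX hY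
  have hVo : IsOpen V := hopen Y X hY hX
  have hUV : U ∩ V = ∅ := by
    rw [Set.eq_empty_iff_forall_notMem]
    rintro θ ⟨h1, h2⟩
    rw [hU, Set.mem_setOf_eq] at h1
    rw [hV, Set.mem_setOf_eq] at h2
    have e1 := ((phi_mem hX θ).2.2 _ (phi_mem hX θ).1).2
    have e2 := ((phi_mem hY θ).2.2 _ (phi_mem hY θ).1).2
    linarith
  by_cases hUuniv : U = Set.univ
  · left; intro θ; have : θ ∈ U := hUuniv ▸ Set.mem_univ θ; exact this
  · right
    by_cases hVuniv : V = Set.univ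
    · intro θ; have : θ ∈ V := hVuniv ▸ Set.mem_univ θ; exact this
    · exfalso
      obtain ⟨θ₁, hθ₁⟩ : ∃ θ, θ ∉ U := by
        by_contra hco; push_neg at hco
        exact hUuniv (Set.eq_univ_of_forall hco)
      obtain ⟨θ₂, hθ₂⟩ : ∃ θ, θ ∉ V := by
        by_contra hco; push_neg at hco
        exact hVuniv (Set.eq_univ_of_forall hco)
      have hθ₁V : θ₁ ∈ V := (hcover θ₁).resolve_left hθ₁
      have hθ₂U : θ₂ ∈ U := (hcover θ₂).resolve_right hθ₂
      have := isPreconnected_univ (u := U) (v := V) hUo hVo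
        (fun θ _ => hcover θ) ⟨θ₂, Set.mem_univ _, hθ₂U⟩ ⟨θ₁, Set.mem_univ _, hθ₁V⟩
      obtain ⟨θ, _, hθ⟩ := this
      rw [Set.eq_empty_iff_forall_notMem] at hUV
      exact hUV θ hθ

/-- Intersection of a nonempty chain of invariant strips is an invariant strip. -/
lemma chain_sInter (hF : IsQpfLift ω F) {c : Set (Set (T1 × ℝ))} (hne : c.Nonempty)
    (hchain : IsChain (· ⊆ ·) c) (hall : ∀ X ∈ c, IsInvStrip ω F X) :
    IsInvStrip ω F (⋂₀ c) := by
  classical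
  obtain ⟨X₀, hX₀⟩ := hne
  have hcl : IsClosed (⋂₀ c) := isClosed_sInter fun X hX => (hall X hX).1.isClosed
  have hcomp : IsCompact (⋂₀ c) :=
    (hall X₀ hX₀).1.of_isClosed_subset hcl (sInter_subset_of_mem hX₀)
  refine ⟨hcomp, ?_, ?_⟩
  · -- invariance via injectivity
    apply subset_antisymm
    · rintro _ ⟨p, hp, rfl⟩
      intro X hX
      rw [← (hall X hX).2.1]
      exact ⟨p, hp X hX, rfl⟩
    · intro q hq
      have hq₀ : q ∈ skew ω F '' X₀ := by rw [(hall X₀ hX₀).2.1]; exact hq X₀ hX₀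
      obtain ⟨p, hp, hpq⟩ := hq₀
      refine ⟨p, ?_, hpq⟩
      intro X hX
      have : q ∈ skew ω F '' X := by rw [(hall X hX).2.1]; exact hq X hX
      obtain ⟨p', hp', hpq'⟩ := this
      rwa [← skew_inj hF (hpq'.trans hpq.symm)]
  · intro θ
    have hfib : {x : ℝ | (θ, x) ∈ ⋂₀ c} = ⋂ X : c, {x : ℝ | (θ, x) ∈ (X : Set (T1 × ℝ))} := by
      ext x; simp [Set.mem_sInter, Set.mem_iInter]
    have hfibs : ∀ X : c, ∃ a b : ℝ, a ≤ b ∧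
        {x : ℝ | (θ, x) ∈ (X : Set (T1 × ℝ))} = Set.Icc a b :=
      fun X => (hall X X.2).2.2 θ
    have hNE : Nonempty c := ⟨⟨X₀, hX₀⟩⟩
    have hdir : Directed (· ⊇ ·) (fun X : c => {x : ℝ | (θ, x) ∈ (X : Set (T1 × ℝ))}) := by
      intro X Y
      rcases hchain.total X.2 Y.2 with h' | h'
      · exact ⟨X, Set.Subset.rfl, fun x hx => h' hx⟩
      · exact ⟨Y, fun x hx => h' hx, Set.Subset.rfl⟩
    have hNEfib : ∀ X : c, {x : ℝ | (θ, x) ∈ (X : Set (T1 × ℝ))}.Nonempty := by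
      intro X
      obtain ⟨a, b, hab, hf⟩ := hfibs X
      rw [hf]; exact ⟨a, le_rfl, hab⟩
    have hCfib : ∀ X : c, IsCompact {x : ℝ | (θ, x) ∈ (X : Set (T1 × ℝ))} := by
      intro X
      obtain ⟨a, b, hab, hf⟩ := hfibs X
      rw [hf]; exact isCompact_Icc
    have hClfib : ∀ X : c, IsClosed {x : ℝ | (θ, x) ∈ (X : Set (T1 × ℝ))} := by
      intro X
      obtain ⟨a, b, hab, hf⟩ := hfibs X
      rw [hf]; exact isClosed_Icc
    have hnon : (⋂ X : c, {x : ℝ | (θ, x) ∈ (X : Set (T1 × ℝ))}).Nonempty :=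
      IsCompact.nonempty_iInter_of_directed_nonempty_isCompact_isClosed _ hdir hNEfib hCfib hClfib
    have hord : (⋂ X : c, {x : ℝ | (θ, x) ∈ (X : Set (T1 × ℝ))}).OrdConnected := by
      apply Set.ordConnected_iInter
      intro X
      obtain ⟨a, b, hab, hf⟩ := hfibs X
      rw [hf]; exact Set.ordConnected_Icc
    have hcfib : IsCompact (⋂ X : c, {x : ℝ | (θ, x) ∈ (X : Set (T1 × ℝ))}) := by
      apply IsCompact.of_isClosed_subset (hCfib ⟨X₀, hX₀⟩)
      · exact isClosed_iInter hClfib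
      · exact Set.iInter_subset _ (⟨X₀, hX₀⟩ : c)
    obtain ⟨a, b, hab, hf⟩ := fiber_interval hcfib hnon hord
    exact ⟨a, b, hab, by rw [hfib, hf]⟩

/-- Every invariant strip contains a minimal invariant strip. -/
lemma minimal_substrip (hF : IsQpfLift ω F) (hX : IsInvStrip ω F X) :
    ∃ B : Set (T1 × ℝ), IsMinimalStrip ω F B ∧ B ⊆ X := by
  classical
  set 𝒮 := {Y : Set (T1 × ℝ) | IsInvStrip ω F Y ∧ Y ⊆ X} with h𝒮
  have hz : ∀ c ⊆ 𝒮, IsChain (· ⊆ ·) c → ∃ lb ∈ 𝒮, ∀ s ∈ c, lb ⊆ s := by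
    intro c hc hchain
    rcases c.eq_empty_or_nonempty with rfl | hne
    · exact ⟨X, ⟨hX, le_rfl⟩, fun s hs => absurd hs (Set.notMem_empty s)⟩
    · refine ⟨⋂₀ c, ⟨chain_sInter hF hne hchain (fun Y hY => (hc hY).1), ?_⟩,
        fun s hs => sInter_subset_of_mem hs⟩
      obtain ⟨Y₀, hY₀⟩ := hne
      exact (sInter_subset_of_mem hY₀).trans (hc hY₀).2
  obtain ⟨m, hm⟩ := zorn_superset 𝒮 hz
  have hmS : IsInvStrip ω F m ∧ m ⊆ X := hm.prop
  refine ⟨m, ⟨hmS.1, ?_⟩, hmS.2⟩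
  intro S hS hSm
  have hS𝒮 : S ∈ 𝒮 := ⟨hS, hSm.trans hmS.2⟩
  exact subset_antisymm hSm (hm.le_of_le hS𝒮 hSm)

/-- Vertical translation of an invariant strip by a natural number. -/
lemma per_nat (hF : IsQpfLift ω F) (θ : T1) (x : ℝ) (k : ℕ) :
    F θ (x + k) = F θ x + k := by
  induction k with
  | zero => simp
  | succ n ih =>
    have : x + (n + 1 : ℕ) = (x + n) + 1 := by push_cast; ring
    rw [this, hF.per, ih]
    push_cast; ring

lemma translate_strip (hF : IsQpfLift ω F) (hX : IsInvStrip ω F X) (k : ℕ) :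
    IsInvStrip ω F ((fun p : T1 × ℝ => (p.1, p.2 + (k : ℝ))) '' X) := by
  set t : T1 × ℝ → T1 × ℝ := fun p => (p.1, p.2 + (k : ℝ)) with ht
  have htc : Continuous t := continuous_fst.prodMk (continuous_snd.add continuous_const)
  refine ⟨hX.1.image htc, ?_, ?_⟩
  · have hcomm : ∀ p : T1 × ℝ, skew ω F (t p) = t (skew ω F p) := by
      intro p
      simp only [skew, t]
      exact Prod.ext rfl (per_nat hF p.1 p.2 k)
    calc skew ω F '' (t '' X) = (fun p => skew ω F (t p)) '' X := by rw [Set.image_image]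
      _ = (fun p => t (skew ω F p)) '' X := Set.image_congr' hcomm
      _ = t '' (skew ω F '' X) := by rw [Set.image_image]
      _ = t '' X := by rw [hX.2.1]
  · intro θ
    obtain ⟨a, b, hab, hf⟩ := hX.2.2 θ
    refine ⟨a + k, b + k, by linarith, ?_⟩
    ext x
    constructor
    · rintro ⟨⟨pθ, px⟩, hp, hpe⟩
      have h1 : pθ = θ := congrArg Prod.fst hpe
      have h2 : px + k = x := congrArg Prod.snd hpe
      rw [h1] at hp
      have : px ∈ Set.Icc a b := by rw [← hf]; exact hp
      exact ⟨by linarith [this.1], by linarith [this.2]⟩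
    · rintro ⟨h1, h2⟩
      refine ⟨(θ, x - k), ?_, show ((θ : T1), x - (k:ℝ) + k) = (θ, x) by rw [sub_add_cancel]⟩
      have : x - k ∈ Set.Icc a b := ⟨by linarith, by linarith⟩
      rw [← hf] at this; exact this

/-- Fiberwise convex hull. -/
def hull (K : Set (T1 × ℝ)) : Set (T1 × ℝ) :=
  {p | ∃ q r : T1 × ℝ, q ∈ K ∧ r ∈ K ∧ q.1 = p.1 ∧ r.1 = p.1 ∧ q.2 ≤ p.2 ∧ p.2 ≤ r.2}

lemma hull_mono {K K' : Set (T1 × ℝ)} (h : K ⊆ K') : hull K ⊆ hull K' := by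
  rintro p ⟨q, r, hq, hr, hq1, hr1, hq2, hr2⟩
  exact ⟨q, r, h hq, h hr, hq1, hr1, hq2, hr2⟩

lemma subset_hull {K : Set (T1 × ℝ)} : K ⊆ hull K := fun p hp =>
  ⟨p, p, hp, hp, rfl, rfl, le_rfl, le_rfl⟩

lemma hull_compact {K : Set (T1 × ℝ)} (hK : IsCompact K) : IsCompact (hull K) := by
  classical
  set D : Set ((T1 × ℝ) × (T1 × ℝ) × ℝ) :=
    (K ×ˢ (K ×ˢ Set.Icc (0:ℝ) 1)) ∩ {z | z.1.1 = z.2.1.1} with hD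
  have hDc : IsCompact D :=
    (hK.prod (hK.prod isCompact_Icc)).inter_right
      (isClosed_eq (continuous_fst.comp continuous_fst)
        ((continuous_fst.comp (continuous_fst.comp continuous_snd))))
  set m : (T1 × ℝ) × (T1 × ℝ) × ℝ → T1 × ℝ :=
    fun z => (z.1.1, z.1.2 + z.2.2 * (z.2.1.2 - z.1.2)) with hm
  have hmc : Continuous m := by
    apply Continuous.prodMk
    · exact continuous_fst.comp continuous_fst
    · exact (continuous_snd.comp continuous_fst).add
        ((continuous_snd.comp continuous_snd).mul
          (((continuous_snd.comp (continuous_fst.comp continuous_snd))).sub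
            (continuous_snd.comp continuous_fst)))
  have himg : m '' D = hull K := by
    apply subset_antisymm
    · rintro _ ⟨⟨q, r, t⟩, ⟨⟨hq, hr, ht⟩, h1⟩, rfl⟩
      simp only [Set.mem_setOf_eq] at h1
      have hx : m (q, r, t) = (q.1, q.2 + t * (r.2 - q.2)) := rfl
      rw [hx]
      rcases le_total q.2 r.2 with hqr | hqr
      · refine ⟨q, r, hq, hr, rfl, h1.symm, ?_, ?_⟩
        · simp only; nlinarith [ht.1, ht.2]
        · simp only; nlinarith [ht.1, ht.2]
      · refine ⟨r, q, hr, hq, h1.symm, rfl, ?_, ?_⟩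
        · simp only; nlinarith [ht.1, ht.2]
        · simp only; nlinarith [ht.1, ht.2]
    · rintro p ⟨q, r, hq, hr, hq1, hr1, hq2, hr2⟩
      have hqr : q.2 ≤ r.2 := le_trans hq2 hr2
      by_cases hqreq : r.2 = q.2
      · refine ⟨(q, r, 0), ⟨⟨hq, hr, le_rfl, zero_le_one⟩, hq1.trans hr1.symm⟩, ?_⟩
        have hp2 : p.2 = q.2 := le_antisymm (hqreq ▸ hr2) hq2
        show (q.1, q.2 + 0 * (r.2 - q.2)) = p
        rw [zero_mul, add_zero, hq1, ← hp2]
      · set t := (p.2 - q.2) / (r.2 - q.2) with htdef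
        have hpos : 0 < r.2 - q.2 := lt_of_le_of_ne (by linarith) (by
          intro h; exact hqreq (by linarith))
        have ht : t ∈ Set.Icc (0:ℝ) 1 := by
          constructor
          · apply div_nonneg (by linarith) hpos.le
          · rw [div_le_one hpos]; linarith
        refine ⟨(q, r, t), ⟨⟨hq, hr, ht⟩, hq1.trans hr1.symm⟩, ?_⟩
        show (q.1, q.2 + t * (r.2 - q.2)) = p
        rw [htdef, div_mul_cancel₀ _ hpos.ne', hq1]
        exact Prod.ext rfl (by simp)
  rw [← himg]
  exact hDc.image hmc

lemma hull_inv (hF : IsQpfLift ω F) {K : Set (T1 × ℝ)} (hKinv : skew ω F '' K = K) :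
    skew ω F '' hull K = hull K := by
  apply subset_antisymm
  · rintro _ ⟨p, ⟨q, r, hq, hr, hq1, hr1, hq2, hr2⟩, rfl⟩
    refine ⟨skew ω F q, skew ω F r, ?_, ?_, ?_, ?_, ?_, ?_⟩
    · rw [← hKinv]; exact ⟨q, hq, rfl⟩
    · rw [← hKinv]; exact ⟨r, hr, rfl⟩
    · show q.1 + _ = p.1 + _; rw [hq1]
    · show r.1 + _ = p.1 + _; rw [hr1]
    · show F q.1 q.2 ≤ F p.1 p.2; rw [hq1]; exact (hF.mono p.1).monotone hq2
    · show F p.1 p.2 ≤ F r.1 r.2; rw [hr1]; exact (hF.mono p.1).monotone hr2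
  · rintro p' ⟨q', r', hq', hr', hq1', hr1', hq2', hr2'⟩
    obtain ⟨q, hq, hqe⟩ : q' ∈ skew ω F '' K := by rw [hKinv]; exact hq'
    obtain ⟨r, hr, hre⟩ : r' ∈ skew ω F '' K := by rw [hKinv]; exact hr'
    obtain ⟨x, hx⟩ := hF.surj q.1 p'.2
    refine ⟨(q.1, x), ⟨q, r, hq, hr, rfl, ?_, ?_, ?_⟩, ?_⟩
    · -- r.1 = q.1
      have e1 : q.1 + (ω : T1) = q'.1 := congrArg Prod.fst hqe
      have e2 : r.1 + (ω : T1) = r'.1 := congrArg Prod.fst hre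
      have : r.1 + (ω : T1) = q.1 + (ω : T1) := by rw [e2, e1, hq1', hr1']
      simpa using congrArg (fun z => z - (ω : T1)) this
    · -- q.2 ≤ x
      have e : F q.1 q.2 = q'.2 := congrArg Prod.snd hqe
      have : F q.1 q.2 ≤ F q.1 x := by rw [e, hx]; exact hq2'
      exact (hF.mono q.1).le_iff_le.mp this
    · -- x ≤ r.2
      have e1 : q.1 + (ω : T1) = q'.1 := congrArg Prod.fst hqe
      have e2 : r.1 + (ω : T1) = r'.1 := congrArg Prod.fst hre
      have hr1q : r.1 = q.1 := by
        have : r.1 + (ω : T1) = q.1 + (ω : T1) := by rw [e2, e1, hq1', hr1']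
        simpa using congrArg (fun z => z - (ω : T1)) this
      have e : F r.1 r.2 = r'.2 := congrArg Prod.snd hre
      have : F q.1 x ≤ F q.1 r.2 := by
        rw [hx, ← hr1q]; rw [e]; exact hr2'
      exact (hF.mono q.1).le_iff_le.mp this
    · -- skew (q.1, x) = p'
      have e1 : q.1 + (ω : T1) = q'.1 := congrArg Prod.fst hqe
      show (q.1 + (ω : T1), F q.1 x) = p'
      rw [hx, e1, hq1']
  
lemma fib_compact {K : Set (T1 × ℝ)} (hK : IsCompact K) (θ : T1) :
    IsCompact {x : ℝ | (θ, x) ∈ K} := by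
  have : {x : ℝ | (θ, x) ∈ K} = Prod.snd '' (K ∩ {p : T1 × ℝ | p.1 = θ}) := by
    ext x
    constructor
    · intro hx; exact ⟨(θ, x), ⟨hx, rfl⟩, rfl⟩
    · rintro ⟨⟨pθ, px⟩, ⟨hp, hp1⟩, rfl⟩
      simp only [Set.mem_setOf_eq] at hp1 ⊢
      rwa [hp1] at hp
  rw [this]
  exact ((hK.inter_right (isClosed_eq continuous_fst continuous_const)).image continuous_snd)

lemma hull_fibers {K : Set (T1 × ℝ)} (hK : IsCompact K)
    (hne : ∀ θ, ∃ x, (θ, x) ∈ K) (θ : T1) :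
    ∃ a b : ℝ, a ≤ b ∧ {x : ℝ | (θ, x) ∈ hull K} = Set.Icc a b := by
  set s := {x : ℝ | (θ, x) ∈ K} with hs
  have hsc : IsCompact s := fib_compact hK θ
  have hsn : s.Nonempty := hne θ
  refine ⟨sInf s, sSup s, le_csSup_of_le hsc.bddAbove (hsc.sInf_mem hsn) le_rfl, ?_⟩
  ext x
  constructor
  · rintro ⟨q, r, hq, hr, hq1, hr1, hq2, hr2⟩
    constructor
    · calc sInf s ≤ q.2 := csInf_le hsc.bddBelow (by
          have hq1' : q.1 = θ := hq1
          rw [hs, Set.mem_setOf_eq, ← hq1']; exact hq)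
        _ ≤ x := hq2
    · calc x ≤ r.2 := hr2
        _ ≤ sSup s := le_csSup hsc.bddAbove (by
          have hr1' : r.1 = θ := hr1
          rw [hs, Set.mem_setOf_eq, ← hr1']; exact hr)
  · rintro ⟨h1, h2⟩
    exact ⟨(θ, sInf s), (θ, sSup s), hsc.sInf_mem hsn, hsc.sSup_mem hsn, rfl, rfl, h1, h2⟩

/-- The hull of the closure of a union of invariant strips is an invariant strip. -/
lemma hullcl_strip (hF : IsQpfLift ω F) {𝒮 : Set (Set (T1 × ℝ))} (hne : 𝒮.Nonempty)
    (hall : ∀ X ∈ 𝒮, IsInvStrip ω F X) {M : ℝ} (hM : ∀ X ∈ 𝒮, ∀ p ∈ X, |p.2| ≤ M) :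
    IsInvStrip ω F (hull (closure (⋃₀ 𝒮))) := by
  obtain ⟨X₀, hX₀⟩ := hne
  set K := closure (⋃₀ 𝒮) with hKdef
  have hbdd : ⋃₀ 𝒮 ⊆ (Set.univ : Set T1) ×ˢ Set.Icc (-M) M := by
    rintro p ⟨X, hX, hp⟩
    exact ⟨Set.mem_univ _, abs_le.mp (hM X hX p hp)⟩
  have hKsub : K ⊆ (Set.univ : Set T1) ×ˢ Set.Icc (-M) M :=
    closure_minimal hbdd (isClosed_univ.prod isClosed_Icc)
  have hKc : IsCompact K :=
    (isCompact_univ.prod isCompact_Icc).of_isClosed_subset isClosed_closure hKsub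
  have hUinv : skew ω F '' ⋃₀ 𝒮 = ⋃₀ 𝒮 := by
    rw [Set.image_sUnion]
    apply subset_antisymm
    · rintro p ⟨T, ⟨X, hX, rfl⟩, hp⟩
      rw [(hall X hX).2.1] at hp
      exact ⟨X, hX, hp⟩
    · rintro p ⟨X, hX, hp⟩
      exact ⟨skew ω F '' X, ⟨X, hX, rfl⟩, by rw [(hall X hX).2.1]; exact hp⟩
  have hKinv : skew ω F '' K = K := by
    apply subset_antisymm
    · calc skew ω F '' K ⊆ closure (skew ω F '' ⋃₀ 𝒮) :=
            image_closure_subset_closure_image (skew_cont hF)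
        _ = K := by rw [hUinv]
    · have hcl : IsClosed (skew ω F '' K) := (hKc.image (skew_cont hF)).isClosed
      apply closure_minimal _ hcl
      rw [← hUinv]
      exact Set.image_mono subset_closure
  have hKne : ∀ θ, ∃ x, (θ, x) ∈ K := by
    intro θ
    obtain ⟨x, hx⟩ := fib_nonempty (hall X₀ hX₀) θ
    exact ⟨x, subset_closure ⟨X₀, hX₀, hx⟩⟩
  exact ⟨hull_compact hKc, hull_inv hF hKinv, hull_fibers hKc hKne⟩

lemma transfer_upper {W U : Set (T1 × ℝ)} (hW : IsCompact W) (M : ℝ)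
    (hU : ∀ p ∈ U, ∃ q ∈ W, q.1 = p.1 ∧ p.2 ≤ q.2 ∧ q.2 - p.2 ≤ M) :
    ∀ p ∈ hull (closure U), ∃ q ∈ W, q.1 = p.1 ∧ p.2 ≤ q.2 := by
  set g : (T1 × ℝ) × ℝ → T1 × ℝ := fun z => (z.1.1, z.1.2 - z.2) with hg
  have hgc : Continuous g := (continuous_fst.comp continuous_fst).prodMk
    ((continuous_snd.comp continuous_fst).sub continuous_snd)
  set Q := g '' (W ×ˢ Set.Icc (0:ℝ) M) with hQ
  have hQc : IsCompact Q := (hW.prod isCompact_Icc).image hgc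
  have hUQ : U ⊆ Q := by
    intro p hp
    obtain ⟨q, hq, h1, h2, h3⟩ := hU p hp
    refine ⟨(q, q.2 - p.2), ⟨hq, show (0:ℝ) ≤ q.2 - p.2 by linarith, show q.2 - p.2 ≤ M from h3⟩, ?_⟩
    show (q.1, q.2 - (q.2 - p.2)) = p
    rw [h1]
    exact Prod.ext rfl (by ring)
  have hclQ : closure U ⊆ Q := closure_minimal hUQ hQc.isClosed
  rintro p ⟨q', r', hq', hr', hq1', hr1', hq2', hr2'⟩
  obtain ⟨⟨q, t⟩, ⟨hq, ht⟩, he⟩ := hclQ hr'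
  have e1 : q.1 = r'.1 := by have := congrArg Prod.fst he; simpa [g] using this
  have e2 : q.2 - t = r'.2 := by have := congrArg Prod.snd he; simpa [g] using this
  refine ⟨q, hq, e1.trans hr1', ?_⟩
  have ht0 : (0:ℝ) ≤ t := ht.1
  calc p.2 ≤ r'.2 := hr2'
    _ = q.2 - t := e2.symm
    _ ≤ q.2 := by linarith

lemma transfer_lower {W U : Set (T1 × ℝ)} (hW : IsCompact W) (δ M : ℝ)
    (hU : ∀ p ∈ U, ∃ q ∈ W, q.1 = p.1 ∧ q.2 + δ ≤ p.2 ∧ p.2 - q.2 ≤ M) :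
    ∀ p ∈ hull (closure U), ∃ q ∈ W, q.1 = p.1 ∧ q.2 + δ ≤ p.2 := by
  set g : (T1 × ℝ) × ℝ → T1 × ℝ := fun z => (z.1.1, z.1.2 + z.2) with hg
  have hgc : Continuous g := (continuous_fst.comp continuous_fst).prodMk
    ((continuous_snd.comp continuous_fst).add continuous_snd)
  set Q := g '' (W ×ˢ Set.Icc δ M) with hQ
  have hQc : IsCompact Q := (hW.prod isCompact_Icc).image hgc
  have hUQ : U ⊆ Q := by
    intro p hp
    obtain ⟨q, hq, h1, h2, h3⟩ := hU p hp
    refine ⟨(q, p.2 - q.2), ⟨hq, show δ ≤ p.2 - q.2 by linarith, show p.2 - q.2 ≤ M from h3⟩, ?_⟩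
    show (q.1, q.2 + (p.2 - q.2)) = p
    rw [h1]
    exact Prod.ext rfl (by ring)
  have hclQ : closure U ⊆ Q := closure_minimal hUQ hQc.isClosed
  rintro p ⟨q', r', hq', hr', hq1', hr1', hq2', hr2'⟩
  obtain ⟨⟨q, t⟩, ⟨hq, ht⟩, he⟩ := hclQ hq'
  have e1 : q.1 = q'.1 := by have := congrArg Prod.fst he; simpa [g] using this
  have e2 : q.2 + t = q'.2 := by have := congrArg Prod.snd he; simpa [g] using this
  refine ⟨q, hq, e1.trans hq1', ?_⟩
  have htδ : δ ≤ t := ht.1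
  calc q.2 + δ ≤ q.2 + t := by linarith
    _ = q'.2 := e2
    _ ≤ p.2 := hq2'

end QPF

/-- case (𝒜1) of the construction in the proof of Proposition 4.1:
if every minimal invariant strip above `A` stays at distance at least `δ` from `A`, then
there is a unique minimal invariant strip directly above `A`, i.e. one with no invariant
strip strictly in between. -/
theorem unique_next_minimal_strip
    (ω : ℝ) (hω : Irrational ω)
    (F : T1 → ℝ → ℝ) (hF : IsQpfLift ω F)
    (A : Set (T1 × ℝ)) (hA : IsMinimalStrip ω F A)
    (δ : ℝ) (hδ : 0 < δ)
    (hdist : ∀ B : Set (T1 × ℝ), IsMinimalStrip ω F B → StripLt A B →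
      ∀ θ : T1, δ ≤ phiInf B θ - phiSup A θ) :
    ∃! B : Set (T1 × ℝ), IsMinimalStrip ω F B ∧ StripLt A B ∧
      ¬ ∃ S : Set (T1 × ℝ), IsInvStrip ω F S ∧ StripLt A S ∧ StripLt S B := by
  classical
  set Fam : Set (Set (T1 × ℝ)) := {B | IsMinimalStrip ω F B ∧ StripLt A B} with hFamdef
  -- pointwise distance estimate
  have hPt : ∀ B ∈ Fam, ∀ (θ : T1) (x y : ℝ), (θ, x) ∈ A → (θ, y) ∈ B → x + δ ≤ y := by
    intro B hB θ x y hx hy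
    have h1 := ((QPF.phi_mem hA.1 θ).2.2 x hx).2
    have h2 := ((QPF.phi_mem hB.1.1 θ).2.2 y hy).1
    have h3 := hdist B hB.1 hB.2 θ
    linarith
  -- Fam is nonempty
  obtain ⟨MA, hMA0, hMA⟩ := QPF.exists_bound hA.1.1
  obtain ⟨k, hkgt⟩ : ∃ k : ℕ, 2 * MA < (k : ℝ) :=
    ⟨⌈2 * MA⌉₊ + 1, by push_cast; linarith [Nat.le_ceil (2 * MA)]⟩
  set T := (fun p : T1 × ℝ => (p.1, p.2 + (k : ℝ))) '' A with hT
  have hTstrip : IsInvStrip ω F T := QPF.translate_strip hF hA.1 k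
  have hAT : StripLt A T := by
    rw [QPF.stripLt_iff hA.1 hTstrip]
    rintro θ x y hx ⟨⟨pθ, px⟩, hp, hpe⟩
    have h1 : pθ = θ := congrArg Prod.fst hpe
    have h2 : px + (k : ℝ) = y := congrArg Prod.snd hpe
    rw [h1] at hp
    have hb1 := hMA _ hx
    have hb2 := hMA _ hp
    simp only [abs_le] at hb1 hb2
    have : x ≤ MA := hb1.2
    have : -MA ≤ px := hb2.1
    linarith
  obtain ⟨B₀, hB₀min, hB₀sub⟩ := QPF.minimal_substrip hF hTstrip
  have hAB₀ : StripLt A B₀ := by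
    rw [QPF.stripLt_iff hA.1 hB₀min.1]
    intro θ x y hx hy
    exact (QPF.stripLt_iff hA.1 hTstrip).1 hAT θ x y hx (hB₀sub hy)
  have hB₀Fam : B₀ ∈ Fam := ⟨hB₀min, hAB₀⟩
  -- comparability
  have hcomp : ∀ B₁ ∈ Fam, ∀ B₂ ∈ Fam, B₁ = B₂ ∨ StripLt B₁ B₂ ∨ StripLt B₂ B₁ := by
    intro B₁ h₁ B₂ h₂
    by_cases h : B₁ = B₂
    · exact Or.inl h
    · refine Or.inr ?_
      rcases QPF.meet_or_disjoint hω hF h₁.1 h₂.1.1 with hsub | hdisj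
      · exact absurd (h₂.1.2 _ h₁.1.1 hsub) h
      · exact QPF.ordered_of_disjoint h₁.1.1 h₂.1.1 hdisj
  by_cases hleast : ∃ B ∈ Fam, ∀ B' ∈ Fam, B = B' ∨ StripLt B B'
  · obtain ⟨Bs, hBs, hle⟩ := hleast
    have hnob : ¬ ∃ S : Set (T1 × ℝ), IsInvStrip ω F S ∧ StripLt A S ∧ StripLt S Bs := by
      rintro ⟨S, hS, hAS, hSB⟩
      obtain ⟨B', hB'min, hB'sub⟩ := QPF.minimal_substrip hF hS
      have hAB' : StripLt A B' := by
        rw [QPF.stripLt_iff hA.1 hB'min.1]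
        intro θ x y hx hy
        exact (QPF.stripLt_iff hA.1 hS).1 hAS θ x y hx (hB'sub hy)
      have hB'Bs : StripLt B' Bs := by
        rw [QPF.stripLt_iff hB'min.1 hBs.1.1]
        intro θ x y hx hy
        exact (QPF.stripLt_iff hS hBs.1.1).1 hSB θ x y (hB'sub hx) hy
      rcases hle B' ⟨hB'min, hAB'⟩ with h | hlt
      · subst h
        exact QPF.stripLt_irrefl hB'min.1 hB'Bs
      · exact QPF.stripLt_asymm hBs.1.1 hB'min.1 hlt hB'Bs
    refine ⟨Bs, ⟨hBs.1, hBs.2, hnob⟩, ?_⟩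
    rintro B ⟨hBmin, hAB, hnb⟩
    rcases hle B ⟨hBmin, hAB⟩ with h | hlt
    · exact h.symm
    · exact absurd ⟨Bs, hBs.1.1, hBs.2, hlt⟩ hnb
  · exfalso
    push_neg at hleast
    have hsmaller : ∀ B ∈ Fam, ∃ B' ∈ Fam, StripLt B' B := by
      intro B hB
      obtain ⟨B', hB', hnot⟩ := hleast B hB
      rcases hcomp B hB B' hB' with h | h | h
      · exact absurd h hnot.1
      · exact absurd h hnot.2
      · exact ⟨B', hB', h⟩
    -- the decreasing hulls
    set 𝒮 : Set (T1 × ℝ) → Set (Set (T1 × ℝ)) :=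
      fun B => {X | X ∈ Fam ∧ (X = B ∨ StripLt X B)} with h𝒮def
    set H : Set (T1 × ℝ) → Set (T1 × ℝ) :=
      fun B => QPF.hull (closure (⋃₀ 𝒮 B)) with hHdef
    have hself : ∀ B ∈ Fam, B ∈ 𝒮 B := fun B hB => ⟨hB, Or.inl rfl⟩
    -- pointwise bounds on members of 𝒮 B
    have hptwise : ∀ B ∈ Fam, ∀ X ∈ 𝒮 B, ∀ p ∈ X,
        (∃ q ∈ B, q.1 = p.1 ∧ p.2 ≤ q.2) ∧ (∃ q ∈ A, q.1 = p.1 ∧ q.2 + δ ≤ p.2) := by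
      rintro B hB X ⟨hXF, hXB⟩ p hp
      constructor
      · rcases hXB with rfl | hlt
        · exact ⟨p, hp, rfl, le_rfl⟩
        · obtain ⟨y, hy⟩ := QPF.fib_nonempty hB.1.1 p.1
          refine ⟨(p.1, y), hy, rfl, le_of_lt ?_⟩
          exact (QPF.stripLt_iff hXF.1.1 hB.1.1).1 hlt p.1 p.2 y hp hy
      · obtain ⟨x, hx⟩ := QPF.fib_nonempty hA.1 p.1
        exact ⟨(p.1, x), hx, rfl, hPt X hXF p.1 x p.2 hx hp⟩
    -- uniform bound for members of 𝒮 B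
    have hbound : ∀ B ∈ Fam, ∃ M : ℝ, 0 ≤ M ∧ ∀ X ∈ 𝒮 B, ∀ p ∈ X, |p.2| ≤ M := by
      intro B hB
      obtain ⟨MB, hMB0, hMB⟩ := QPF.exists_bound hB.1.1.1
      refine ⟨MA + MB, by linarith, ?_⟩
      intro X hX p hp
      obtain ⟨⟨q, hq, _, hq2⟩, ⟨r, hr, _, hr2⟩⟩ := hptwise B hB X hX p hp
      have h1 := hMB q hq
      have h2 := hMA r hr
      simp only [abs_le] at h1 h2 ⊢
      constructor
      · linarith [h2.1]
      · linarith [h1.2]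
    have hHstrip : ∀ B ∈ Fam, IsInvStrip ω F (H B) := by
      intro B hB
      obtain ⟨M, hM0, hM⟩ := hbound B hB
      exact QPF.hullcl_strip hF ⟨B, hself B hB⟩ (fun X hX => hX.1.1.1) hM
    -- transfer of bounds to H B
    have hup : ∀ B ∈ Fam, ∀ p ∈ H B, ∃ q ∈ B, q.1 = p.1 ∧ p.2 ≤ q.2 := by
      intro B hB
      obtain ⟨M, hM0, hM⟩ := hbound B hB
      obtain ⟨MB, hMB0, hMB⟩ := QPF.exists_bound hB.1.1.1
      apply QPF.transfer_upper hB.1.1.1 (M + MB)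
      rintro p ⟨X, hX, hp⟩
      obtain ⟨⟨q, hq, hq1, hq2⟩, -⟩ := hptwise B hB X hX p hp
      refine ⟨q, hq, hq1, hq2, ?_⟩
      have h1 := hMB q hq
      have h2 := hM X hX p hp
      simp only [abs_le] at h1 h2
      linarith [h1.2, h2.1]
    have hlow : ∀ B ∈ Fam, ∀ p ∈ H B, ∃ q ∈ A, q.1 = p.1 ∧ q.2 + δ ≤ p.2 := by
      intro B hB
      obtain ⟨M, hM0, hM⟩ := hbound B hB
      apply QPF.transfer_lower hA.1.1 δ (M + MA)
      rintro p ⟨X, hX, hp⟩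
      obtain ⟨-, ⟨q, hq, hq1, hq2⟩⟩ := hptwise B hB X hX p hp
      refine ⟨q, hq, hq1, hq2, ?_⟩
      have h1 := hMA q hq
      have h2 := hM X hX p hp
      simp only [abs_le] at h1 h2
      linarith [h1.1, h2.2]
    -- monotonicity of H along the order
    have hHmono : ∀ B₁ ∈ Fam, ∀ B₂ ∈ Fam, StripLt B₁ B₂ → H B₁ ⊆ H B₂ := by
      intro B₁ h₁ B₂ h₂ hlt
      apply QPF.hull_mono
      apply closure_mono
      apply Set.sUnion_mono
      rintro X ⟨hXF, hXB⟩
      refine ⟨hXF, Or.inr ?_⟩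
      rcases hXB with rfl | hXlt
      · exact hlt
      · exact QPF.stripLt_trans hXF.1.1 h₁.1.1 h₂.1.1 hXlt hlt
    -- the intersection
    set 𝒞 : Set (Set (T1 × ℝ)) := H '' Fam with h𝒞def
    have h𝒞ne : 𝒞.Nonempty := ⟨H B₀, B₀, hB₀Fam, rfl⟩
    have h𝒞chain : IsChain (· ⊆ ·) 𝒞 := by
      rintro _ ⟨B₁, h₁, rfl⟩ _ ⟨B₂, h₂, rfl⟩ hne
      rcases hcomp B₁ h₁ B₂ h₂ with h | h | h
      · subst h; exact absurd rfl hne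
      · exact Or.inl (hHmono B₁ h₁ B₂ h₂ h)
      · exact Or.inr (hHmono B₂ h₂ B₁ h₁ h)
    have h𝒞all : ∀ X ∈ 𝒞, IsInvStrip ω F X := by
      rintro _ ⟨B, hB, rfl⟩; exact hHstrip B hB
    set C := ⋂₀ 𝒞 with hCdef
    have hCstrip : IsInvStrip ω F C := QPF.chain_sInter hF h𝒞ne h𝒞chain h𝒞all
    have hCsub : ∀ B ∈ Fam, C ⊆ H B := fun B hB => Set.sInter_subset_of_mem ⟨B, hB, rfl⟩
    have hClow : ∀ p ∈ C, ∃ q ∈ A, q.1 = p.1 ∧ q.2 + δ ≤ p.2 :=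
      fun p hp => hlow B₀ hB₀Fam p (hCsub B₀ hB₀Fam hp)
    -- A lies strictly below C
    have hdisj : A ∩ C = ∅ := by
      rcases QPF.meet_or_disjoint hω hF hA hCstrip with hsub | h
      · exfalso
        obtain ⟨x, hx⟩ := QPF.fib_nonempty hA.1 0
        have hminA : ((0 : T1), phiInf A 0) ∈ A := (QPF.phi_mem hA.1 0).1
        obtain ⟨q, hq, hq1, hq2⟩ := hClow _ (hsub hminA)
        have : ((0 : T1), q.2) ∈ A := by
          have hq1' : q.1 = (0 : T1) := hq1
          rw [← hq1']; exact hq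
        have := ((QPF.phi_mem hA.1 0).2.2 q.2 this).1
        simp only at hq2
        linarith
      · exact h
    have hAC : StripLt A C := by
      rcases QPF.ordered_of_disjoint hA.1 hCstrip hdisj with h | h
      · exact h
      · exfalso
        obtain ⟨x, hx⟩ := QPF.fib_nonempty hCstrip 0
        obtain ⟨q, hq, hq1, hq2⟩ := hClow _ hx
        have hqA : ((0 : T1), q.2) ∈ A := by
          have hq1' : q.1 = (0 : T1) := hq1
          rw [← hq1']; exact hq
        have := (QPF.stripLt_iff hCstrip hA.1).1 h 0 x q.2 hx hqA
        simp only at hq2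
        linarith
    -- a minimal strip inside C
    obtain ⟨C₁, hC₁min, hC₁sub⟩ := QPF.minimal_substrip hF hCstrip
    have hAC₁ : StripLt A C₁ := by
      rw [QPF.stripLt_iff hA.1 hC₁min.1]
      intro θ x y hx hy
      exact (QPF.stripLt_iff hA.1 hCstrip).1 hAC θ x y hx (hC₁sub hy)
    have hC₁Fam : C₁ ∈ Fam := ⟨hC₁min, hAC₁⟩
    obtain ⟨B', hB'Fam, hB'lt⟩ := hsmaller C₁ hC₁Fam
    obtain ⟨x, hx⟩ := QPF.fib_nonempty hC₁min.1 0
    have hxH : ((0 : T1), x) ∈ H B' := hCsub B' hB'Fam (hC₁sub hx)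
    obtain ⟨q, hq, hq1, hq2⟩ := hup B' hB'Fam _ hxH
    have hqB : ((0 : T1), q.2) ∈ B' := by
      have hq1' : q.1 = (0 : T1) := hq1
      rw [← hq1']; exact hq
    have := (QPF.stripLt_iff hB'Fam.1.1 hC₁min.1).1 hB'lt 0 q.2 x hqB hx
    simp only at hq2
    linarith
end
end
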